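/- arXiv:2302.08438 — 10 statements merged into one kernel-verified Lean document; each statement's English description precedes it below -/
import Mathlib

section
/- Let n ≥ 2, let L be an n×n real symmetric positive semidefinite matrix with L𝟙 = 0, and let λ₂ > 0 be such that x*Lx ≥ λ₂‖x‖² for every complex vector x orthogonal to 𝟙 (λ₂ is a lower bound on the second-smallest eigenvalue of L). Let z₁,…,zₙ ∈ ℂ (the values gᵢ⁻¹(s₀)) satisfy |zᵢ| ≤ M₂ for all i, suppose ∑ᵢ zᵢ ≠ 0, and let ḡ := ((1/n)∑ᵢ zᵢ)⁻¹ satisfy |ḡ| ≤ M₁, where M₁, M₂ > 0. Let φ ∈ ℂ (the value f(s₀)). If |φ|·λ₂ > M₂ + M₁M₂², then the complex matrix A := diag(z₁,…,zₙ) + φ·L (with L coerced to ℂ) is invertible and ‖A⁻¹ − (ḡ/n)·𝟙𝟙ᵀ‖ ≤ (M₁M₂ + 1)² / (|φ|λ₂ − M₂ − M₁M₂²). -/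
open Matrix Complex

noncomputable def ev {n : ℕ} (x : Fin n → ℂ) : EuclideanSpace ℂ (Fin n) :=
  (WithLp.equiv 2 _).symm x

lemma ev_norm {n : ℕ} (x : Fin n → ℂ) : ‖ev x‖ = Real.sqrt (∑ i, ‖x i‖ ^ 2) := by
  simp [ev, EuclideanSpace.norm_eq]

lemma ev_norm_sq {n : ℕ} (x : Fin n → ℂ) : ‖ev x‖ ^ 2 = ∑ i, ‖x i‖ ^ 2 := by
  rw [ev_norm, Real.sq_sqrt]; positivity

lemma ev_cs {n : ℕ} (x y : Fin n → ℂ) :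
    ‖∑ i, (starRingEnd ℂ) (x i) * y i‖ ≤ ‖ev x‖ * ‖ev y‖ := by
  have := norm_inner_le_norm (𝕜 := ℂ) (ev x) (ev y)
  simpa [ev, PiLp.inner_apply, RCLike.inner_apply, mul_comm] using this

lemma ev_ptwise {n : ℕ} {x y : Fin n → ℂ} {M : ℝ} (hM : 0 ≤ M)
    (h : ∀ i, ‖x i‖ ≤ M * ‖y i‖) : ‖ev x‖ ≤ M * ‖ev y‖ := by
  rw [ev_norm, ev_norm, ← Real.sqrt_sq hM, ← Real.sqrt_mul (sq_nonneg M)]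
  apply Real.sqrt_le_sqrt
  rw [Finset.mul_sum]
  refine Finset.sum_le_sum fun i _ => ?_
  have := h i
  nlinarith [norm_nonneg (x i), norm_nonneg (y i)]

lemma ev_const {n : ℕ} (c : ℂ) : ‖ev (fun _ : Fin n => c)‖ = ‖c‖ * Real.sqrt n := by
  rw [ev_norm]
  simp only [Finset.sum_const, Finset.card_univ, Fintype.card_fin, nsmul_eq_mul]
  rw [Real.sqrt_mul (by positivity), Real.sqrt_sq (norm_nonneg c)]
  ring

lemma ev_one {n : ℕ} : ‖ev (fun _ : Fin n => (1:ℂ))‖ = Real.sqrt n := by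
  rw [ev_const]; simp

/-- Spectral norm (L2 operator norm) of a complex matrix. -/
noncomputable def specNorm {n : ℕ} (A : Matrix (Fin n) (Fin n) ℂ) : ℝ :=
  ‖Matrix.toEuclideanCLM (𝕜 := ℂ) A‖

/-- The all-ones matrix. -/
def allOnes (n : ℕ) : Matrix (Fin n) (Fin n) ℂ := Matrix.of fun _ _ => 1

set_option maxHeartbeats 1000000 in
/-- Lemma 1 of the paper. -/
theorem stmt_0 {n : ℕ} (hn : 2 ≤ n)
    (L : Matrix (Fin n) (Fin n) ℝ) (hL : L.PosSemidef)
    (hL1 : L.mulVec (fun _ => 1) = 0)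
    (lam2 : ℝ) (hlam2 : 0 < lam2)
    (hgap : ∀ x : Fin n → ℂ, (∑ i, x i = 0) →
      lam2 * ∑ i, ‖x i‖ ^ 2 ≤ (star x ⬝ᵥ (L.map (Complex.ofReal)).mulVec x).re)
    (z : Fin n → ℂ) (M₁ M₂ : ℝ) (hM₁ : 0 < M₁) (hM₂ : 0 < M₂)
    (hz : ∀ i, ‖z i‖ ≤ M₂) (hsum : ∑ i, z i ≠ 0)
    (gbar : ℂ) (hgbar : gbar = ((n : ℂ)⁻¹ * ∑ i, z i)⁻¹) (hgbarbd : ‖gbar‖ ≤ M₁)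
    (φ : ℂ) (hcond : M₂ + M₁ * M₂ ^ 2 < ‖φ‖ * lam2) :
    IsUnit (Matrix.diagonal z + φ • L.map (Complex.ofReal)) ∧
      specNorm ((Matrix.diagonal z + φ • L.map (Complex.ofReal))⁻¹
          - (gbar / n) • allOnes n)
        ≤ (M₁ * M₂ + 1) ^ 2 / (‖φ‖ * lam2 - M₂ - M₁ * M₂ ^ 2) := by
  set L' := L.map (Complex.ofReal) with hL'def
  set A := Matrix.diagonal z + φ • L' with hAdef
  have hn0 : (0:ℝ) < n := by
    have : (0:ℕ) < n := by omega
    exact_mod_cast this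
  have hnC : ((n:ℂ)) ≠ 0 := by exact_mod_cast (by omega : n ≠ 0)
  have hsq : (0:ℝ) < Real.sqrt n := Real.sqrt_pos.2 hn0
  have hsqsq : Real.sqrt n * Real.sqrt n = (n:ℝ) := Real.mul_self_sqrt hn0.le
  set denom := ‖φ‖ * lam2 - M₂ - M₁ * M₂ ^ 2 with hdenomdef
  have hdpos : 0 < denom := by simp only [hdenomdef]; linarith
  -- row and column sums of L vanish
  have hLrow : ∀ i, ∑ j, L i j = 0 := by
    intro i
    have := congrFun hL1 i
    simpa [Matrix.mulVec, dotProduct] using this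
  have hLsym : ∀ i j, L i j = L j i := by
    intro i j
    have := congrFun (congrFun hL.1 j) i
    simpa [Matrix.conjTranspose_apply] using this
  have hLcol : ∀ j, ∑ i, L i j = 0 := by
    intro j
    rw [show ∑ i, L i j = ∑ i, L j i from Finset.sum_congr rfl fun i _ => hLsym i j]
    exact hLrow j
  -- complex row sums
  have hL'row : ∀ i, ∑ j, L' i j = 0 := by
    intro i
    simp only [hL'def, Matrix.map_apply]
    rw [← Complex.ofReal_sum]
    exact_mod_cast congrArg Complex.ofReal (hLrow i)
  -- sum of entries of L'.mulVec x is zero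
  have hsumL' : ∀ x : Fin n → ℂ, ∑ i, (L'.mulVec x) i = 0 := by
    intro x
    simp only [Matrix.mulVec, dotProduct]
    rw [Finset.sum_comm]
    refine Finset.sum_eq_zero fun j _ => ?_
    rw [← Finset.sum_mul]
    have : ∑ i, L' i j = 0 := by
      simp only [hL'def, Matrix.map_apply]
      rw [← Complex.ofReal_sum]
      exact_mod_cast congrArg Complex.ofReal (hLcol j)
    rw [this, zero_mul]
  -- entries of A.mulVec
  have hAx : ∀ (x : Fin n → ℂ) (i), A.mulVec x i = z i * x i + φ * (L'.mulVec x) i := by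
    intro x i
    simp [hAdef, Matrix.add_mulVec, Matrix.mulVec_diagonal, Matrix.smul_mulVec]
  -- sum of entries of A.mulVec
  have hAsum : ∀ x : Fin n → ℂ, ∑ i, A.mulVec x i = ∑ i, z i * x i := by
    intro x
    rw [Finset.sum_congr rfl fun i _ => hAx x i, Finset.sum_add_distrib, ← Finset.mul_sum,
      hsumL' x, mul_zero, add_zero]
  -- lower bound on |∑ z|
  have hsumz : (n:ℝ) ≤ M₁ * ‖∑ i, z i‖ := by
    have hg0 : gbar ≠ 0 := by
      rw [hgbar]
      exact inv_ne_zero (mul_ne_zero (inv_ne_zero hnC) hsum)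
    have hgp : 0 < ‖gbar‖ := norm_pos_iff.2 hg0
    have h1 : ‖gbar‖⁻¹ = (n:ℝ)⁻¹ * ‖∑ i, z i‖ := by
      rw [hgbar, norm_inv, inv_inv, norm_mul, norm_inv]
      norm_num
    have h2 : M₁⁻¹ ≤ ‖gbar‖⁻¹ := by
      apply inv_anti₀ hgp hgbarbd
    rw [h1] at h2
    have := mul_le_mul_of_nonneg_left h2 (le_of_lt (mul_pos hn0 hM₁))
    calc (n:ℝ) = n * M₁ * M₁⁻¹ := by field_simp
    _ ≤ n * M₁ * ((n:ℝ)⁻¹ * ‖∑ i, z i‖) := by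
        apply mul_le_mul_of_nonneg_left h2 (by positivity)
    _ = M₁ * ‖∑ i, z i‖ := by field_simp
  -- Cauchy-Schwarz with z
  have hzvgen : ∀ w : Fin n → ℂ, ‖∑ i, z i * w i‖ ≤ M₂ * Real.sqrt n * ‖ev w‖ := by
    intro w
    have hzvec : ‖ev (fun i => (starRingEnd ℂ) (z i))‖ ≤ M₂ * Real.sqrt n := by
      have := ev_ptwise (x := fun i => (starRingEnd ℂ) (z i)) (y := fun _ : Fin n => (1:ℂ))
        hM₂.le (fun i => by simpa using hz i)
      simpa [ev_one] using this
    have h1 := ev_cs (fun i => (starRingEnd ℂ) (z i)) w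
    simp only [RingHomCompTriple.comp_apply, RingHom.id_apply, starRingEnd_self_apply] at h1
    calc ‖∑ i, z i * w i‖ ≤ ‖ev (fun i => (starRingEnd ℂ) (z i))‖ * ‖ev w‖ := h1
    _ ≤ M₂ * Real.sqrt n * ‖ev w‖ :=
        mul_le_mul_of_nonneg_right hzvec (norm_nonneg _)
  -- the central estimates
  have main : ∀ x : Fin n → ℂ,
      denom * ‖ev (fun i => x i - (↑n)⁻¹ * ∑ j, x j)‖
          ≤ (1 + M₁ * M₂) * ‖ev (A.mulVec x)‖ ∧
      ‖(↑n : ℂ)⁻¹ * ∑ j, x j‖ * Real.sqrt n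
          ≤ M₁ * (‖ev (A.mulVec x)‖ + M₂ * ‖ev (fun i => x i - (↑n)⁻¹ * ∑ j, x j)‖) := by
    intro x
    set a : ℂ := (↑n)⁻¹ * ∑ j, x j with hadef
    set v : Fin n → ℂ := fun i => x i - a with hvdef
    set s := ‖ev (A.mulVec x)‖ with hsdef
    set nv := ‖ev v‖ with hnvdef
    have hs0 : 0 ≤ s := norm_nonneg _
    have hnv0 : 0 ≤ nv := norm_nonneg _
    have hvsum : ∑ i, v i = 0 := by
      simp only [hvdef, Finset.sum_sub_distrib, Finset.sum_const, Finset.card_univ,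
        Fintype.card_fin, nsmul_eq_mul, hadef]
      field_simp
      ring
    have hzx : ∑ i, z i * x i = ∑ i, z i * v i + a * ∑ i, z i := by
      rw [Finset.mul_sum, ← Finset.sum_add_distrib]
      refine Finset.sum_congr rfl fun i _ => ?_
      simp only [hvdef]; ring
    -- Cauchy-Schwarz facts
    have hCSu : ‖∑ i, A.mulVec x i‖ ≤ Real.sqrt n * s := by
      have := ev_cs (fun _ : Fin n => (1:ℂ)) (A.mulVec x)
      simpa [ev_one] using this
    have hzv : ‖∑ i, z i * v i‖ ≤ M₂ * Real.sqrt n * nv := hzvgen v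
    -- (II)
    have hII : ‖a‖ * Real.sqrt n ≤ M₁ * (s + M₂ * nv) := by
      have e1 : a * ∑ i, z i = ∑ i, A.mulVec x i - ∑ i, z i * v i := by
        rw [hAsum x, hzx]; ring
      have e2 : ‖a‖ * ‖∑ i, z i‖ ≤ Real.sqrt n * s + M₂ * Real.sqrt n * nv := by
        rw [← norm_mul, e1]
        calc ‖∑ i, A.mulVec x i - ∑ i, z i * v i‖
            ≤ ‖∑ i, A.mulVec x i‖ + ‖∑ i, z i * v i‖ := norm_sub_le _ _
        _ ≤ Real.sqrt n * s + M₂ * Real.sqrt n * nv := add_le_add hCSu hzv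
      nlinarith [norm_nonneg a, mul_le_mul_of_nonneg_left hsumz (norm_nonneg a),
        mul_le_mul_of_nonneg_left e2 hM₁.le]
    -- L' kills the shift
    have hLxv : L'.mulVec x = L'.mulVec v := by
      funext i
      simp only [Matrix.mulVec, dotProduct]
      have : ∑ j, L' i j * x j - ∑ j, L' i j * v j = (∑ j, L' i j) * a := by
        rw [← Finset.sum_sub_distrib, Finset.sum_mul]
        refine Finset.sum_congr rfl fun j _ => ?_
        simp only [hvdef]; ring
      rw [hL'row i, zero_mul] at this
      exact sub_eq_zero.mp this
    -- (I)
    have hQ := hgap v hvsum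
    set c : ℂ := star v ⬝ᵥ L'.mulVec v with hcdef
    have hnv2 : nv ^ 2 = ∑ i, ‖v i‖ ^ 2 := ev_norm_sq v
    have hcre : lam2 * nv ^ 2 ≤ c.re := by rw [hnv2]; exact hQ
    have hcnorm : c.re ≤ ‖c‖ := by
      exact Complex.re_le_norm c
    have hcdot : c = ∑ i, (starRingEnd ℂ) (v i) * (L'.mulVec v) i := by
      simp [hcdef, dotProduct]
    have hT : ∑ i, (starRingEnd ℂ) (v i) * (A.mulVec x) i
        = ∑ i, (starRingEnd ℂ) (v i) * (z i * x i) + φ * c := by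
      have h : ∀ i, (starRingEnd ℂ) (v i) * (A.mulVec x) i
          = (starRingEnd ℂ) (v i) * (z i * x i)
            + φ * ((starRingEnd ℂ) (v i) * (L'.mulVec v) i) := by
        intro i
        rw [hAx x i, hLxv]
        ring
      rw [Finset.sum_congr rfl fun i _ => h i, Finset.sum_add_distrib, ← Finset.mul_sum, ← hcdot]
    have hTbd : ‖∑ i, (starRingEnd ℂ) (v i) * (A.mulVec x) i‖ ≤ nv * s := ev_cs v (A.mulVec x)
    have hzxvec : ‖ev (fun i => z i * x i)‖ ≤ M₂ * ‖ev x‖ :=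
      ev_ptwise hM₂.le (fun i => by
        rw [norm_mul]; exact mul_le_mul_of_nonneg_right (hz i) (norm_nonneg _))
    have hvzx : ‖∑ i, (starRingEnd ℂ) (v i) * (z i * x i)‖ ≤ nv * (M₂ * ‖ev x‖) := by
      calc ‖∑ i, (starRingEnd ℂ) (v i) * (z i * x i)‖
          ≤ ‖ev v‖ * ‖ev (fun i => z i * x i)‖ := ev_cs v _
      _ ≤ nv * (M₂ * ‖ev x‖) := mul_le_mul_of_nonneg_left hzxvec hnv0
    have hxnorm : ‖ev x‖ ≤ nv + ‖a‖ * Real.sqrt n := by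
      have hxe : x = fun i => v i + a * 1 := funext fun i => by simp [hvdef]
      have hx2 : ev x = ev v + a • ev (fun _ : Fin n => (1:ℂ)) := by
        rw [hxe]; rfl
      rw [hx2]
      calc ‖ev v + a • ev (fun _ : Fin n => (1:ℂ))‖
          ≤ ‖ev v‖ + ‖a • ev (fun _ : Fin n => (1:ℂ))‖ := norm_add_le _ _
      _ = nv + ‖a‖ * Real.sqrt n := by rw [norm_smul, ev_one]
    have hφc : ‖φ‖ * ‖c‖ ≤ nv * s + nv * (M₂ * ‖ev x‖) := by
      rw [← norm_mul]
      have h : φ * c = (∑ i, (starRingEnd ℂ) (v i) * (A.mulVec x) i)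
          - ∑ i, (starRingEnd ℂ) (v i) * (z i * x i) := by rw [hT]; ring
      rw [h]
      exact le_trans (norm_sub_le _ _) (add_le_add hTbd hvzx)
    have hI : ‖φ‖ * lam2 * nv ^ 2 ≤ nv * s + M₂ * nv * (nv + ‖a‖ * Real.sqrt n) := by
      have h1 : ‖φ‖ * (lam2 * nv ^ 2) ≤ ‖φ‖ * ‖c‖ :=
        mul_le_mul_of_nonneg_left (le_trans hcre hcnorm) (norm_nonneg φ)
      have h2 : nv * (M₂ * ‖ev x‖) ≤ M₂ * nv * (nv + ‖a‖ * Real.sqrt n) := by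
        have := mul_le_mul_of_nonneg_left hxnorm (mul_nonneg hM₂.le hnv0)
        linarith [this]
      linarith [h1, hφc, h2]
    clear_value a v s nv c
    refine ⟨?_, hII⟩
    rcases eq_or_lt_of_le hnv0 with h0 | hpos
    · rw [← h0, mul_zero]
      positivity
    · have h3 := mul_le_mul_of_nonneg_left hII (mul_nonneg hM₂.le hnv0)
      have h4 : (‖φ‖ * lam2 - M₂ - M₁ * M₂ ^ 2) * nv ^ 2 ≤ (1 + M₁ * M₂) * s * nv := by
        linarith only [hI, h3]
      rw [hdenomdef]
      by_contra hcon
      push_neg at hcon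
      have h5 := mul_lt_mul_of_pos_right hcon hpos
      linarith only [h4, h5]
  -- injectivity of A
  have hker : ∀ w : Fin n → ℂ, A.mulVec w = 0 → w = 0 := by
    intro w hw
    obtain ⟨h1, h2⟩ := main w
    rw [hw] at h1 h2
    have hz0 : ‖ev (0 : Fin n → ℂ)‖ = 0 := by
      rw [ev_norm]; simp
    rw [hz0] at h1 h2
    set a : ℂ := (↑n)⁻¹ * ∑ j, w j with hadef
    have hv0 : ‖ev (fun i => w i - a)‖ = 0 := by
      have hnn := norm_nonneg (ev (fun i => w i - a))
      nlinarith [h1, hdpos]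
    have hveq : (fun i => w i - a) = (0 : Fin n → ℂ) :=
      (WithLp.equiv 2 (Fin n → ℂ)).symm.injective (norm_eq_zero.mp hv0)
    have ha0 : a = 0 := by
      have h6 : ‖a‖ * Real.sqrt n ≤ 0 := by
        rw [hv0] at h2
        simpa using h2
      have h7 : ‖a‖ = 0 := by nlinarith [hsq, norm_nonneg a]
      exact norm_eq_zero.mp h7
    funext i
    have h8 := congrFun hveq i
    rw [ha0] at h8
    simpa using h8
  have hinj : Function.Injective A.mulVec := by
    intro x y hxy
    have h := hker (x - y) (by rw [Matrix.mulVec_sub, hxy, sub_self])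
    exact sub_eq_zero.mp h
  have hunit : IsUnit A := Matrix.mulVec_injective_iff_isUnit.mp hinj
  refine ⟨hunit, ?_⟩
  have hAA : A * A⁻¹ = 1 := Matrix.mul_nonsing_inv A ((Matrix.isUnit_iff_isUnit_det A).mp hunit)
  set B := A⁻¹ - (gbar / n) • allOnes n with hBdef
  show ‖Matrix.toEuclideanCLM (𝕜 := ℂ) B‖ ≤ (M₁ * M₂ + 1) ^ 2 / denom
  apply ContinuousLinearMap.opNorm_le_bound _ (div_nonneg (by positivity) hdpos.le)
  intro y0
  set y : Fin n → ℂ := WithLp.equiv 2 _ y0 with hydef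
  have hy0 : ‖y0‖ = ‖ev y‖ := rfl
  have happ : Matrix.toEuclideanCLM (𝕜 := ℂ) B y0 = ev (B.mulVec y) := rfl
  rw [happ, hy0]
  set x := A⁻¹.mulVec y with hxdef
  have hAxy : A.mulVec x = y := by
    rw [hxdef, Matrix.mulVec_mulVec, hAA, Matrix.one_mulVec]
  obtain ⟨h1, -⟩ := main x
  rw [hAxy] at h1
  set a : ℂ := (↑n)⁻¹ * ∑ j, x j with hadef
  set v : Fin n → ℂ := fun i => x i - a with hvdef
  clear_value x
  have hsy : ∑ j, y j = ∑ j, z j * v j + a * ∑ j, z j := by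
    rw [← hAxy, hAsum x, Finset.mul_sum, ← Finset.sum_add_distrib]
    refine Finset.sum_congr rfl fun i _ => ?_
    simp only [hvdef]; ring
  have hgna : gbar / n * (a * ∑ j, z j) = a := by
    have hone : gbar * ((n:ℂ)⁻¹ * ∑ j, z j) = 1 := by
      rw [hgbar]; exact inv_mul_cancel₀ (mul_ne_zero (inv_ne_zero hnC) hsum)
    calc gbar / n * (a * ∑ j, z j) = a * (gbar * ((n:ℂ)⁻¹ * ∑ j, z j)) := by
          rw [div_eq_mul_inv]; ring
    _ = a := by rw [hone, mul_one]
  have hid : B.mulVec y = fun i => v i - gbar / n * ∑ j, z j * v j := by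
    funext i
    rw [hBdef, Matrix.sub_mulVec]
    simp only [Pi.sub_apply]
    have h2 : ((gbar / n) • allOnes n).mulVec y i = gbar / n * ∑ j, y j := by
      simp [allOnes, Matrix.mulVec, dotProduct, Finset.mul_sum]
    rw [h2, ← hxdef, hsy, mul_add, hgna]
    simp only [hvdef]
    ring
  have hidn : ‖ev (B.mulVec y)‖ ≤ (1 + M₁ * M₂) * ‖ev v‖ := by
    rw [hid]
    have hsplit : ev (fun i => v i - gbar / n * ∑ j, z j * v j)
        = ev v + (-(gbar / n * ∑ j, z j * v j)) • ev (fun _ : Fin n => (1:ℂ)) := by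
      have h3 : (fun i => v i - gbar / n * ∑ j, z j * v j)
          = fun i => v i + (-(gbar / n * ∑ j, z j * v j)) * 1 := by
        funext i; ring
      rw [h3]; rfl
    rw [hsplit]
    have htri := norm_add_le (ev v) ((-(gbar / n * ∑ j, z j * v j)) • ev (fun _ : Fin n => (1:ℂ)))
    rw [norm_smul, ev_one, norm_neg] at htri
    have hco : ‖gbar / n * ∑ j, z j * v j‖ * Real.sqrt n ≤ M₁ * M₂ * ‖ev v‖ := by
      have hS := hzvgen v
      have e : ‖gbar / (n:ℂ) * ∑ j, z j * v j‖ = ‖gbar‖ / n * ‖∑ j, z j * v j‖ := by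
        rw [norm_mul, norm_div]
        norm_num
      rw [e]
      have h7 : ‖gbar‖ / n * ‖∑ j, z j * v j‖ ≤ M₁ / n * (M₂ * Real.sqrt n * ‖ev v‖) := by
        gcongr
      have h8 : M₁ / n * (M₂ * Real.sqrt n * ‖ev v‖) * Real.sqrt n = M₁ * M₂ * ‖ev v‖ := by
        rw [div_mul_eq_mul_div, div_mul_eq_mul_div]
        rw [show M₁ * (M₂ * Real.sqrt n * ‖ev v‖) * Real.sqrt n
            = M₁ * M₂ * ‖ev v‖ * (Real.sqrt n * Real.sqrt n) by ring, hsqsq]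
        field_simp
      calc ‖gbar‖ / n * ‖∑ j, z j * v j‖ * Real.sqrt n
          ≤ M₁ / n * (M₂ * Real.sqrt n * ‖ev v‖) * Real.sqrt n :=
            mul_le_mul_of_nonneg_right h7 hsq.le
      _ = M₁ * M₂ * ‖ev v‖ := h8
    calc ‖ev v + (-(gbar / n * ∑ j, z j * v j)) • ev (fun _ : Fin n => (1:ℂ))‖
        ≤ ‖ev v‖ + ‖gbar / n * ∑ j, z j * v j‖ * Real.sqrt n := htri
    _ ≤ ‖ev v‖ + M₁ * M₂ * ‖ev v‖ := by linarith [hco]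
    _ = (1 + M₁ * M₂) * ‖ev v‖ := by ring
  calc ‖ev (B.mulVec y)‖ ≤ (1 + M₁ * M₂) * ‖ev v‖ := hidn
  _ ≤ (M₁ * M₂ + 1) ^ 2 / denom * ‖ev y‖ := by
      rw [div_mul_eq_mul_div, le_div_iff₀ hdpos]
      have h6 := mul_le_mul_of_nonneg_left h1 (by positivity : (0:ℝ) ≤ 1 + M₁ * M₂)
      linarith only [h6]
end

section
/- Fix n ≥ 2 and let g₁,…,gₙ : ℂ → ℂ and f : ℂ → ℂ. Let S ⊂ ℂ be a compact set such that: each map s ↦ gᵢ(s)⁻¹ is continuous on S, the sum ∑ᵢ gᵢ(s)⁻¹ is nonzero for every s ∈ S (so that the coherent dynamics ḡ(s) := ((1/n)∑ᵢ gᵢ(s)⁻¹)⁻¹ is defined and continuous on S), and inf_{s∈S} |f(s)| > 0. Then for every ε > 0 there exists λ₀ > 0 such that for every n×n real symmetric positive semidefinite matrix L with L𝟙 = 0 satisfying x*Lx ≥ λ₀‖x‖² for every complex vector x orthogonal to 𝟙, and for every s ∈ S, the matrix diag(g₁(s)⁻¹,…,gₙ(s)⁻¹) + f(s)·L is invertible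 and ‖(diag(g₁(s)⁻¹,…,gₙ(s)⁻¹) + f(s)·L)⁻¹ − (1/n)ḡ(s)·𝟙𝟙ᵀ‖ ≤ ε. -/
open Matrix Complex

noncomputable def en {n : ℕ} (x : Fin n → ℂ) : ℝ :=
  ‖(WithLp.equiv 2 (Fin n → ℂ)).symm x‖

lemma en_eq {n : ℕ} (x : Fin n → ℂ) : en x = Real.sqrt (∑ i, ‖x i‖ ^ 2) := by
  simp [en, EuclideanSpace.norm_eq]

lemma en_nonneg {n : ℕ} (x : Fin n → ℂ) : 0 ≤ en x := norm_nonneg _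

lemma en_sq {n : ℕ} (x : Fin n → ℂ) : en x ^ 2 = ∑ i, ‖x i‖ ^ 2 := by
  rw [en_eq, Real.sq_sqrt]; positivity

lemma en_eq_zero {n : ℕ} {x : Fin n → ℂ} (h : en x ≤ 0) : x = 0 := by
  have : (WithLp.equiv 2 (Fin n → ℂ)).symm x = 0 := norm_le_zero_iff.mp h
  simpa using congrArg (WithLp.equiv 2 (Fin n → ℂ)) this

lemma en_add_le {n : ℕ} (x y : Fin n → ℂ) : en (x + y) ≤ en x + en y := by
  simpa [en] using norm_add_le ((WithLp.equiv 2 (Fin n → ℂ)).symm x)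
    ((WithLp.equiv 2 (Fin n → ℂ)).symm y)

lemma cs {n : ℕ} (u v : Fin n → ℂ) : ‖star u ⬝ᵥ v‖ ≤ en u * en v := by
  have := norm_inner_le_norm (𝕜 := ℂ) ((WithLp.equiv 2 (Fin n → ℂ)).symm u)
    ((WithLp.equiv 2 (Fin n → ℂ)).symm v)
  rwa [show inner ℂ ((WithLp.equiv 2 (Fin n → ℂ)).symm u) ((WithLp.equiv 2 (Fin n → ℂ)).symm v)
      = star u ⬝ᵥ v from by rw [dotProduct_comm]; rfl] at this

lemma en_le_of_sq_le {n : ℕ} {x : Fin n → ℂ} {C : ℝ} (hC : 0 ≤ C)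
    (h : ∑ i, ‖x i‖ ^ 2 ≤ C ^ 2) : en x ≤ C := by
  rw [en_eq]
  have := Real.sqrt_le_sqrt h
  rwa [Real.sqrt_sq hC] at this

lemma en_const {n : ℕ} (c0 : ℂ) : en (fun _ : Fin n => c0) = Real.sqrt n * ‖c0‖ := by
  rw [en_eq]
  have : ∑ _i : Fin n, ‖c0‖ ^ 2 = (n : ℝ) * ‖c0‖ ^ 2 := by
    simp [Finset.sum_const, mul_comm]
  rw [this, Real.sqrt_mul (by positivity), Real.sqrt_sq (norm_nonneg _)]


lemma en_zero {n : ℕ} : en (0 : Fin n → ℂ) = 0 := by simp [en_eq]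

lemma en_neg {n : ℕ} (x : Fin n → ℂ) : en (-x) = en x := by simp [en_eq]

lemma en_sub_le {n : ℕ} (x y : Fin n → ℂ) : en (x - y) ≤ en x + en y := by
  have := en_add_le x (-y)
  rwa [en_neg, ← sub_eq_add_neg] at this

lemma sum_norm_le_en {n : ℕ} (z : Fin n → ℂ) : ‖∑ i, z i‖ ≤ Real.sqrt n * en z := by
  have h := cs (fun _ => (1 : ℂ)) z
  have h1 : star (fun _ : Fin n => (1 : ℂ)) ⬝ᵥ z = ∑ i, z i := by
    simp [dotProduct]
  have h2 : en (fun _ : Fin n => (1 : ℂ)) = Real.sqrt n := by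
    rw [en_const]; simp
  rw [h1, h2] at h
  exact h

lemma en_mul_le {n : ℕ} {d x : Fin n → ℂ} {G : ℝ} (hG : 0 ≤ G) (hd : ∀ i, ‖d i‖ ≤ G) :
    en (fun i => d i * x i) ≤ G * en x := by
  apply en_le_of_sq_le (mul_nonneg hG (en_nonneg x))
  rw [mul_pow, en_sq, Finset.mul_sum]
  apply Finset.sum_le_sum
  intro i _
  rw [norm_mul, mul_pow]
  have h1 : ‖d i‖ ^ 2 ≤ G ^ 2 := by
    apply pow_le_pow_left₀ (norm_nonneg _) (hd i)
  exact mul_le_mul_of_nonneg_right h1 (by positivity)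

lemma specNorm_le {n : ℕ} (A : Matrix (Fin n) (Fin n) ℂ) {C : ℝ} (hC : 0 ≤ C)
    (h : ∀ z : Fin n → ℂ, en (A.mulVec z) ≤ C * en z) : specNorm A ≤ C := by
  apply ContinuousLinearMap.opNorm_le_bound _ hC
  intro x
  have hx : x = (WithLp.equiv 2 (Fin n → ℂ)).symm (WithLp.equiv 2 (Fin n → ℂ) x) := rfl
  rw [hx, WithLp.equiv_symm_apply, Matrix.toEuclideanCLM_toLp]
  have := h (WithLp.equiv 2 (Fin n → ℂ) x)
  simpa [en, Matrix.toLin'_apply] using this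

set_option maxHeartbeats 1600000 in
/-- Theorem 2 of the paper, coherence under high network connectivity. -/
theorem stmt_1 {n : ℕ} (hn : 2 ≤ n) (g : Fin n → ℂ → ℂ) (f : ℂ → ℂ)
    (S : Set ℂ) (hS : IsCompact S)
    (hgcont : ∀ i, ContinuousOn (fun s => (g i s)⁻¹) S)
    (hsum : ∀ s ∈ S, ∑ i, (g i s)⁻¹ ≠ 0)
    (hf : ∃ c > 0, ∀ s ∈ S, c ≤ ‖f s‖)
    (ε : ℝ) (hε : 0 < ε) :
    ∃ lam0 > 0, ∀ L : Matrix (Fin n) (Fin n) ℝ,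
      L.PosSemidef → L.mulVec (fun _ => 1) = 0 →
      (∀ x : Fin n → ℂ, (∑ i, x i = 0) →
        lam0 * ∑ i, ‖x i‖ ^ 2 ≤ (star x ⬝ᵥ (L.map (Complex.ofReal)).mulVec x).re) →
      ∀ s ∈ S,
        IsUnit (Matrix.diagonal (fun i => (g i s)⁻¹) + f s • L.map (Complex.ofReal)) ∧
        specNorm ((Matrix.diagonal (fun i => (g i s)⁻¹) + f s • L.map (Complex.ofReal))⁻¹
            - ((n : ℂ)⁻¹ * ((n : ℂ)⁻¹ * ∑ i, (g i s)⁻¹)⁻¹) • allOnes n) ≤ ε := by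
  obtain ⟨c, hc, hfc⟩ := hf
  rcases S.eq_empty_or_nonempty with rfl | hSne
  · exact ⟨1, one_pos, fun L _ _ _ s hs => absurd hs (Set.notMem_empty s)⟩
  have hn0C : (n : ℂ) ≠ 0 := Nat.cast_ne_zero.mpr (by omega)
  -- uniform upper bound G on ‖(g i s)⁻¹‖
  choose B hB using fun i => hS.exists_bound_of_continuousOn (hgcont i)
  set G : ℝ := ∑ i, max (B i) 0 with hGdef
  have hG0 : 0 ≤ G := Finset.sum_nonneg fun i _ => le_max_right _ _
  have hGb : ∀ s ∈ S, ∀ i, ‖(g i s)⁻¹‖ ≤ G := by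
    intro s hs i
    calc ‖(g i s)⁻¹‖ ≤ B i := hB i s hs
      _ ≤ max (B i) 0 := le_max_left _ _
      _ ≤ G := Finset.single_le_sum (fun j _ => le_max_right (B j) 0) (Finset.mem_univ i)
  -- uniform lower bound a0 on ‖avg s‖
  set avg : ℂ → ℂ := fun s => (n : ℂ)⁻¹ * ∑ i, (g i s)⁻¹ with havg
  have havgcont : ContinuousOn avg S :=
    continuousOn_const.mul (continuousOn_finset_sum _ fun i _ => hgcont i)
  obtain ⟨s₀, hs₀, hmin⟩ := hS.exists_isMinOn hSne havgcont.norm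
  set a0 : ℝ := ‖avg s₀‖ with ha0def
  have ha0 : 0 < a0 := by
    rw [ha0def]
    refine norm_pos_iff.mpr ?_
    exact mul_ne_zero (inv_ne_zero hn0C) (hsum s₀ hs₀)
  have ha0le : ∀ s ∈ S, a0 ≤ ‖avg s‖ := fun s hs => hmin hs
  -- constants
  set K₁ : ℝ := 1 + G / a0 with hK₁
  set K₂ : ℝ := G ^ 2 / a0 + G with hK₂
  have hK₁1 : 1 ≤ K₁ := by
    rw [hK₁]; nlinarith [div_nonneg hG0 ha0.le]
  have hK₁0 : 0 < K₁ := lt_of_lt_of_le one_pos hK₁1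
  have hK₂0 : 0 ≤ K₂ := by positivity
  set lam0 : ℝ := (K₂ + K₁ ^ 2 / ε + 1) / c with hlam0def
  have hlam0 : 0 < lam0 := by
    apply div_pos _ hc
    positivity
  clear_value G a0 K₁ K₂ lam0
  refine ⟨lam0, hlam0, ?_⟩
  intro L hLpsd hL1 hLlam s hs
  set D : Matrix (Fin n) (Fin n) ℂ := Matrix.diagonal (fun i => (g i s)⁻¹) with hD
  set Lc : Matrix (Fin n) (Fin n) ℂ := L.map Complex.ofReal with hLc
  set M : Matrix (Fin n) (Fin n) ℂ := D + f s • Lc with hM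
  set a : ℂ := avg s with ha
  have ha_ne : a ≠ 0 := mul_ne_zero (inv_ne_zero hn0C) (hsum s hs)
  have ha0s : a0 ≤ ‖a‖ := ha0le s hs
  have hfs : c ≤ ‖f s‖ := hfc s hs
  have hGs : ∀ i, ‖(g i s)⁻¹‖ ≤ G := hGb s hs
  -- column sums of Lc vanish
  have hLc1 : Lc *ᵥ (fun _ => (1 : ℂ)) = 0 := by
    funext j
    have h1 : (L *ᵥ (fun _ => (1 : ℝ))) j = 0 := by rw [hL1]; rfl
    simp only [Matrix.mulVec, dotProduct, hLc, Matrix.map_apply, mul_one] at h1 ⊢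
    rw [← Complex.ofReal_sum, h1, Complex.ofReal_zero]
    rfl
  have ha' : a = (n : ℂ)⁻¹ * ∑ i, (g i s)⁻¹ := ha
  have hna : (n : ℂ) * a = ∑ i, (g i s)⁻¹ := by
    rw [ha', ← mul_assoc, mul_inv_cancel₀ hn0C, one_mul]
  clear_value a
  have hnR : (0:ℝ) < (n : ℝ) := by positivity
  have hsq : (0:ℝ) < Real.sqrt n := Real.sqrt_pos.mpr hnR
  have hrn : Real.sqrt n * Real.sqrt n = (n : ℝ) := Real.mul_self_sqrt hnR.le
  have hgq : ∀ x : Fin n → ℂ, ‖∑ j, (g j s)⁻¹ * x j‖ ≤ Real.sqrt n * (G * en x) := by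
    intro x
    have hu : star (fun j => star ((g j s)⁻¹)) ⬝ᵥ x = ∑ j, (g j s)⁻¹ * x j := by
      simp [dotProduct]
    have hen : en (fun j => star ((g j s)⁻¹)) ≤ Real.sqrt n * G := by
      apply en_le_of_sq_le (mul_nonneg hsq.le hG0)
      have hb : ∀ j : Fin n, ‖star ((g j s)⁻¹)‖ ^ 2 ≤ G ^ 2 := by
        intro j
        rw [norm_star]
        exact pow_le_pow_left₀ (norm_nonneg _) (hGs j) 2
      calc ∑ j, ‖star ((g j s)⁻¹)‖ ^ 2 ≤ ∑ _j : Fin n, G ^ 2 :=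
            Finset.sum_le_sum fun j _ => hb j
        _ = (n : ℝ) * G ^ 2 := by simp [Finset.sum_const, mul_comm]
        _ = (Real.sqrt n * G) ^ 2 := by rw [mul_pow, Real.sq_sqrt hnR.le]
    calc ‖∑ j, (g j s)⁻¹ * x j‖ = ‖star (fun j => star ((g j s)⁻¹)) ⬝ᵥ x‖ := by rw [hu]
      _ ≤ en (fun j => star ((g j s)⁻¹)) * en x := cs _ _
      _ ≤ Real.sqrt n * G * en x := mul_le_mul_of_nonneg_right hen (en_nonneg x)
      _ = Real.sqrt n * (G * en x) := by ring
  have hLcol : ∀ w : Fin n → ℂ, ∑ j, (Lc *ᵥ w) j = 0 := by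
    intro w
    have hsymm : ∀ i j, L i j = L j i := fun i j => by
      have h := congrFun (congrFun hLpsd.1 j) i
      simpa [Matrix.conjTranspose_apply] using h
    simp only [Matrix.mulVec, dotProduct]
    rw [Finset.sum_comm]
    apply Finset.sum_eq_zero
    intro k _
    rw [← Finset.sum_mul]
    have : ∑ j, Lc j k = 0 := by
      have h1 : (L *ᵥ (fun _ => (1 : ℝ))) k = 0 := by rw [hL1]; rfl
      simp only [Matrix.mulVec, dotProduct, mul_one] at h1
      simp only [hLc, Matrix.map_apply]
      rw [← Complex.ofReal_sum]
      have : ∑ j, L j k = ∑ j, L k j := by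
        apply Finset.sum_congr rfl; intro j _; rw [hsymm j k]
      rw [this, h1, Complex.ofReal_zero]
    rw [this, zero_mul]
  -- the core estimate
  have main : ∀ w z : Fin n → ℂ, M *ᵥ w = z →
      (K₁ ^ 2 / ε + 1) * en (w - fun _ => (n : ℂ)⁻¹ * ∑ i, w i) ≤ K₁ * en z ∧
      a0 * en (fun _ : Fin n => (n : ℂ)⁻¹ * ∑ i, w i) ≤
        en z + G * en (w - fun _ => (n : ℂ)⁻¹ * ∑ i, w i) ∧
      ∑ j, z j = ∑ j, (g j s)⁻¹ * w j := by
    intro w z hwz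
    set β : ℂ := (n : ℂ)⁻¹ * ∑ i, w i with hβ
    set p : Fin n → ℂ := fun _ => β with hp
    set q : Fin n → ℂ := w - p with hqdef
    have hwpq : w = p + q := by rw [hqdef]; abel
    have hwj : ∀ j, w j = β + q j := by
      intro j; simp [hqdef, hp]
    have hps : p = β • (fun _ => (1 : ℂ)) := by funext i; simp [hp]
    have hsumq : ∑ i, q i = 0 := by
      simp only [hqdef, Pi.sub_apply, hp, Finset.sum_sub_distrib, Finset.sum_const,
        Finset.card_univ, Fintype.card_fin, nsmul_eq_mul, hβ]
      rw [← mul_assoc, mul_inv_cancel₀ hn0C, one_mul, sub_self]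
    have hLcp : Lc *ᵥ p = 0 := by
      rw [hps, Matrix.mulVec_smul, hLc1, smul_zero]
    have hLcw : Lc *ᵥ w = Lc *ᵥ q := by
      rw [hwpq, Matrix.mulVec_add, hLcp, zero_add]
    have hz : z = D *ᵥ w + f s • (Lc *ᵥ q) := by
      rw [← hwz, hM, Matrix.add_mulVec, Matrix.smul_mulVec, hLcw]
    have hDwf : D *ᵥ w = fun i => (g i s)⁻¹ * w i := by
      funext i; rw [hD, Matrix.mulVec_diagonal]
    have hDw : en (D *ᵥ w) ≤ G * en w := by
      rw [hDwf]; exact en_mul_le hG0 hGs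
    have hdot : f s * (star q ⬝ᵥ (Lc *ᵥ q)) = star q ⬝ᵥ z - star q ⬝ᵥ (D *ᵥ w) := by
      rw [hz, dotProduct_add, dotProduct_smul, smul_eq_mul]
      ring
    -- step (4): bound on en q
    have hq2 : (c * lam0) * en q ≤ en z + G * en w := by
      have h1 := hLlam q hsumq
      have h1' : lam0 * en q ^ 2 ≤ (star q ⬝ᵥ Lc *ᵥ q).re := by rwa [en_sq]
      have h2 : c * (lam0 * en q ^ 2) ≤ ‖f s‖ * (star q ⬝ᵥ Lc *ᵥ q).re :=
        mul_le_mul hfs h1' (by positivity) (norm_nonneg _)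
      have h3 : ‖f s‖ * (star q ⬝ᵥ Lc *ᵥ q).re ≤ ‖f s‖ * ‖star q ⬝ᵥ Lc *ᵥ q‖ :=
        mul_le_mul_of_nonneg_left (Complex.re_le_norm _) (norm_nonneg _)
      have h4 : ‖f s‖ * ‖star q ⬝ᵥ Lc *ᵥ q‖ = ‖star q ⬝ᵥ z - star q ⬝ᵥ (D *ᵥ w)‖ := by
        rw [← norm_mul, hdot]
      have h5 : ‖star q ⬝ᵥ z - star q ⬝ᵥ (D *ᵥ w)‖ ≤ en q * en z + en q * (G * en w) := by
        refine (norm_sub_le _ _).trans (add_le_add (cs q z) ?_)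
        exact (cs q (D *ᵥ w)).trans (mul_le_mul_of_nonneg_left hDw (en_nonneg q))
      have hq1 : c * (lam0 * en q ^ 2) ≤ en q * (en z + G * en w) := by
        calc c * (lam0 * en q ^ 2) ≤ ‖f s‖ * (star q ⬝ᵥ Lc *ᵥ q).re := h2
          _ ≤ ‖f s‖ * ‖star q ⬝ᵥ Lc *ᵥ q‖ := h3
          _ = ‖star q ⬝ᵥ z - star q ⬝ᵥ (D *ᵥ w)‖ := h4
          _ ≤ en q * en z + en q * (G * en w) := h5
          _ = en q * (en z + G * en w) := by ring
      rcases eq_or_lt_of_le (en_nonneg q) with h0 | h0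
      · rw [← h0, mul_zero]
        have := en_nonneg z
        have := en_nonneg w
        positivity
      · refine le_of_mul_le_mul_right ?_ h0
        calc (c * lam0) * en q * en q = c * (lam0 * en q ^ 2) := by ring
          _ ≤ en q * (en z + G * en w) := hq1
          _ = (en z + G * en w) * en q := by ring
    -- sum identity
    have hsumLc : ∑ j, (f s • (Lc *ᵥ q)) j = 0 := by
      simp only [Pi.smul_apply, smul_eq_mul, ← Finset.mul_sum, hLcol q, mul_zero]
    have hsumz : ∑ j, z j = ∑ j, (g j s)⁻¹ * w j := by
      rw [hz]
      simp only [Pi.add_apply, Finset.sum_add_distrib, hsumLc, add_zero, hDwf]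
    -- step (6): bound on en p
    have hβid : β * ((n : ℂ) * a) = (∑ j, z j) - ∑ j, (g j s)⁻¹ * q j := by
      rw [hna, hsumz, ← Finset.sum_sub_distrib]
      have : ∀ j, (g j s)⁻¹ * w j - (g j s)⁻¹ * q j = (g j s)⁻¹ * β := by
        intro j; rw [← mul_sub, hwj j]; ring_nf
      rw [Finset.sum_congr rfl (fun j _ => this j), ← Finset.sum_mul]
      ring
    have henp : en p = Real.sqrt n * ‖β‖ := by rw [hp, en_const]
    have hβnorm : ‖β‖ * ((n : ℝ) * ‖a‖) ≤ Real.sqrt n * en z + Real.sqrt n * (G * en q) := by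
      have h1 : ‖(n : ℂ) * a‖ = (n : ℝ) * ‖a‖ := by
        rw [norm_mul, Complex.norm_natCast]
      calc ‖β‖ * ((n : ℝ) * ‖a‖) = ‖β‖ * ‖(n : ℂ) * a‖ := by rw [h1]
        _ = ‖β * ((n : ℂ) * a)‖ := (norm_mul _ _).symm
        _ = ‖(∑ j, z j) - ∑ j, (g j s)⁻¹ * q j‖ := by rw [hβid]
        _ ≤ ‖∑ j, z j‖ + ‖∑ j, (g j s)⁻¹ * q j‖ := norm_sub_le _ _
        _ ≤ Real.sqrt n * en z + Real.sqrt n * (G * en q) :=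
            add_le_add (sum_norm_le_en z) (hgq q)
    have f2 : a0 * en p ≤ en z + G * en q := by
      refine le_of_mul_le_mul_right ?_ hsq
      have e3 : a0 * en p * Real.sqrt n = (n : ℝ) * (a0 * ‖β‖) := by
        rw [henp]
        calc a0 * (Real.sqrt n * ‖β‖) * Real.sqrt n
            = (Real.sqrt n * Real.sqrt n) * (a0 * ‖β‖) := by ring
          _ = (n : ℝ) * (a0 * ‖β‖) := by rw [hrn]
      have e4 : (n : ℝ) * (a0 * ‖β‖) ≤ (n : ℝ) * (‖a‖ * ‖β‖) := by
        have : a0 * ‖β‖ ≤ ‖a‖ * ‖β‖ := mul_le_mul_of_nonneg_right ha0s (norm_nonneg β)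
        exact mul_le_mul_of_nonneg_left this (by positivity)
      have e5 : (en z + G * en q) * Real.sqrt n
          = Real.sqrt n * en z + Real.sqrt n * (G * en q) := by ring
      rw [e3, e5]
      calc (n : ℝ) * (a0 * ‖β‖) ≤ (n : ℝ) * (‖a‖ * ‖β‖) := e4
        _ = ‖β‖ * ((n : ℝ) * ‖a‖) := by ring
        _ ≤ Real.sqrt n * en z + Real.sqrt n * (G * en q) := hβnorm
    -- combine
    have f3 : en w ≤ en p + en q := by
      rw [hwpq]; exact en_add_le p q
    have hclam : c * lam0 = K₂ + K₁ ^ 2 / ε + 1 := by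
      rw [hlam0def, mul_div_cancel₀ _ (ne_of_gt hc)]
    have f1 : (K₂ + K₁ ^ 2 / ε + 1) * en q ≤ en z + G * en w := by
      rw [← hclam]; exact hq2
    have hstar : (K₁ ^ 2 / ε + 1) * en q ≤ K₁ * en z := by
      have e1 : a0 * K₂ = G ^ 2 + a0 * G := by
        rw [hK₂, mul_add, mul_comm a0 (G ^ 2 / a0), div_mul_cancel₀ _ (ne_of_gt ha0)]
      have e2 : a0 * K₁ = a0 + G := by
        rw [hK₁, mul_add, mul_one, mul_comm a0 (G / a0), div_mul_cancel₀ _ (ne_of_gt ha0)]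
      have e1q : (a0 * K₂) * en q = (G ^ 2 + a0 * G) * en q := by rw [e1]
      have e2z : a0 * (K₁ * en z) = (a0 + G) * en z := by rw [← mul_assoc, e2]
      have A1 : a0 * ((K₂ + K₁ ^ 2 / ε + 1) * en q) ≤ a0 * (en z + G * en w) :=
        mul_le_mul_of_nonneg_left f1 ha0.le
      have A2 : G * (a0 * en p) ≤ G * (en z + G * en q) :=
        mul_le_mul_of_nonneg_left f2 hG0
      have A3 : (G * a0) * en w ≤ (G * a0) * (en p + en q) :=
        mul_le_mul_of_nonneg_left f3 (mul_nonneg hG0 ha0.le)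
      refine le_of_mul_le_mul_left ?_ ha0
      linarith [A1, A2, A3, e1q, e2z]
    exact ⟨hstar, f2, hsumz⟩
  -- injectivity hence invertibility
  have hinj : Function.Injective M.mulVec := by
    intro w1 w2 h12
    have h0 : M *ᵥ (w1 - w2) = 0 := by rw [Matrix.mulVec_sub, h12, sub_self]
    obtain ⟨h1, h2, -⟩ := main (w1 - w2) (0 : Fin n → ℂ) h0
    rw [en_zero, mul_zero] at h1
    have hd : (0:ℝ) < K₁ ^ 2 / ε + 1 := by
      have : (0:ℝ) ≤ K₁ ^ 2 / ε := div_nonneg (by positivity) hε.le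
      linarith
    have hq0 : en ((w1 - w2) - fun _ => (n : ℂ)⁻¹ * ∑ i, (w1 - w2) i) ≤ 0 := by
      nlinarith [en_nonneg ((w1 - w2) - fun _ => (n : ℂ)⁻¹ * ∑ i, (w1 - w2) i)]
    have hqz := en_eq_zero hq0
    rw [hqz] at h2
    simp only [en_zero, mul_zero, add_zero, zero_add] at h2
    have hp0 : en (fun _ : Fin n => (n : ℂ)⁻¹ * ∑ i, (w1 - w2) i) ≤ 0 := by
      nlinarith [en_nonneg (fun _ : Fin n => (n : ℂ)⁻¹ * ∑ i, (w1 - w2) i), h2]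
    have hpz := en_eq_zero hp0
    have hxy : w1 - w2 = 0 := by
      rw [sub_eq_zero] at hqz
      rw [hqz, hpz]
    exact sub_eq_zero.mp hxy
  have hMU : IsUnit M := Matrix.mulVec_injective_iff_isUnit.mp hinj
  refine ⟨hMU, ?_⟩
  have hdet : IsUnit M.det := (Matrix.isUnit_iff_isUnit_det M).mp hMU
  apply specNorm_le _ hε.le
  intro z
  set w : Fin n → ℂ := M⁻¹ *ᵥ z with hwdef
  have hwz : M *ᵥ w = z := by
    rw [hwdef, Matrix.mulVec_mulVec, Matrix.mul_nonsing_inv _ hdet, Matrix.one_mulVec]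
  clear_value w
  obtain ⟨hstar, -, hsumz⟩ := main w z hwz
  set β : ℂ := (n : ℂ)⁻¹ * ∑ i, w i with hβ
  set q : Fin n → ℂ := w - fun _ => β with hqdef
  clear_value β q
  have hsg : (∑ i, (g i s)⁻¹) ≠ 0 := hsum s hs
  -- the key identity for the applied vector
  have hv : (M⁻¹ - ((n : ℂ)⁻¹ * ((n : ℂ)⁻¹ * ∑ i, (g i s)⁻¹)⁻¹) • allOnes n) *ᵥ z
      = q - fun _ => a⁻¹ * ((n : ℂ)⁻¹ * ∑ j, (g j s)⁻¹ * q j) := by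
    funext i
    have hall : (allOnes n *ᵥ z) i = ∑ j, z j := by
      simp [allOnes, Matrix.mulVec, dotProduct]
    have lhs : ((M⁻¹ - ((n : ℂ)⁻¹ * ((n : ℂ)⁻¹ * ∑ i, (g i s)⁻¹)⁻¹) • allOnes n) *ᵥ z) i
        = w i - (n : ℂ)⁻¹ * ((n : ℂ)⁻¹ * ∑ i, (g i s)⁻¹)⁻¹ * ∑ j, z j := by
      rw [Matrix.sub_mulVec]
      simp only [Pi.sub_apply, Matrix.smul_mulVec, Pi.smul_apply, smul_eq_mul, hall, hwdef]
    rw [lhs, hsumz]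
    have hqj : ∀ j, q j = w j - β := fun j => by rw [hqdef]; rfl
    simp only [Pi.sub_apply, hqj]
    have hexp : ∑ j, (g j s)⁻¹ * (w j - β) =
        (∑ j, (g j s)⁻¹ * w j) - β * ∑ j, (g j s)⁻¹ := by
      rw [Finset.mul_sum, ← Finset.sum_sub_distrib]
      exact Finset.sum_congr rfl fun j _ => by ring
    rw [hexp]
    have hts : ((n : ℂ)⁻¹ * ∑ i, (g i s)⁻¹)⁻¹ * ((n : ℂ)⁻¹ * ∑ i, (g i s)⁻¹) = 1 :=
      inv_mul_cancel₀ (mul_ne_zero (inv_ne_zero hn0C) hsg)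
    rw [ha']
    linear_combination (-β) * hts
  rw [hv]
  -- norm bound
  have hvfinal : en (q - fun _ : Fin n => a⁻¹ * ((n : ℂ)⁻¹ * ∑ j, (g j s)⁻¹ * q j))
      ≤ K₁ * en q := by
    refine (en_sub_le _ _).trans ?_
    have h1 : en (fun _ : Fin n => a⁻¹ * ((n : ℂ)⁻¹ * ∑ j, (g j s)⁻¹ * q j))
        ≤ (G / a0) * en q := by
      rw [en_const]
      have h2 : ‖a⁻¹ * ((n : ℂ)⁻¹ * ∑ j, (g j s)⁻¹ * q j)‖
          = ‖a‖⁻¹ * ((n : ℝ)⁻¹ * ‖∑ j, (g j s)⁻¹ * q j‖) := by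
        rw [norm_mul, norm_mul, norm_inv, norm_inv, Complex.norm_natCast]
      rw [h2]
      have h3 : ‖a‖⁻¹ ≤ a0⁻¹ := by
        apply inv_anti₀ ha0 ha0s
      have h4 : ‖∑ j, (g j s)⁻¹ * q j‖ ≤ Real.sqrt n * (G * en q) := hgq q
      have h5 : (n : ℝ)⁻¹ * ‖∑ j, (g j s)⁻¹ * q j‖
          ≤ (n : ℝ)⁻¹ * (Real.sqrt n * (G * en q)) :=
        mul_le_mul_of_nonneg_left h4 (inv_nonneg.mpr hnR.le)
      calc Real.sqrt n * (‖a‖⁻¹ * ((n : ℝ)⁻¹ * ‖∑ j, (g j s)⁻¹ * q j‖))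
          ≤ Real.sqrt n * (a0⁻¹ * ((n : ℝ)⁻¹ * (Real.sqrt n * (G * en q)))) := by
            refine mul_le_mul_of_nonneg_left ?_ (Real.sqrt_nonneg _)
            refine mul_le_mul h3 h5 (by positivity) (inv_nonneg.mpr ha0.le)
        _ = (Real.sqrt n * Real.sqrt n) * (n : ℝ)⁻¹ * (a0⁻¹ * (G * en q)) := by ring
        _ = (n : ℝ) * (n : ℝ)⁻¹ * (a0⁻¹ * (G * en q)) := by rw [hrn]
        _ = a0⁻¹ * (G * en q) := by rw [mul_inv_cancel₀ (ne_of_gt hnR), one_mul]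
        _ = (G / a0) * en q := by rw [division_def]; ring
    calc en q + en (fun _ : Fin n => a⁻¹ * ((n : ℂ)⁻¹ * ∑ j, (g j s)⁻¹ * q j))
        ≤ en q + (G / a0) * en q := add_le_add le_rfl h1
      _ = K₁ * en q := by rw [hK₁]; ring
  have hd : (0:ℝ) < K₁ ^ 2 / ε + 1 :=
    add_pos_of_nonneg_of_pos (div_nonneg (sq_nonneg K₁) hε.le) one_pos
  have hKq : K₁ * en q ≤ ε * en z := by
    refine le_of_mul_le_mul_left ?_ hd
    have he : (K₁ ^ 2 / ε + 1) * (ε * en z) = (K₁ ^ 2 + ε) * en z := by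
      have h7 : K₁ ^ 2 / ε * ε = K₁ ^ 2 := div_mul_cancel₀ _ (ne_of_gt hε)
      linear_combination en z * h7
    calc (K₁ ^ 2 / ε + 1) * (K₁ * en q) = K₁ * ((K₁ ^ 2 / ε + 1) * en q) := by ring
      _ ≤ K₁ * (K₁ * en z) := mul_le_mul_of_nonneg_left hstar hK₁0.le
      _ = K₁ ^ 2 * en z := by ring
      _ ≤ (K₁ ^ 2 + ε) * en z :=
          mul_le_mul_of_nonneg_right (le_add_of_nonneg_right hε.le) (en_nonneg z)
      _ = (K₁ ^ 2 / ε + 1) * (ε * en z) := he.symm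
  exact hvfinal.trans hKq
end

section
/- Let n ≥ 1 and ε > 0. Let z₁,…,zₙ ∈ ℂ be nonzero and output strictly passive values: Re(zᵢ) ≥ ε|zᵢ|² for all i. Let w ∈ ℂ with Re(w) ≥ 0, and let L be an n×n real symmetric positive semidefinite matrix. Then: (a) the matrix M := diag(z₁⁻¹,…,zₙ⁻¹) + w·L (with L coerced to ℂ) is invertible and ‖M⁻¹‖ ≤ 2/ε; and (b) ∑ᵢ zᵢ⁻¹ ≠ 0 and |((1/n)∑ᵢ zᵢ⁻¹)⁻¹| ≤ 2/ε. -/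
open Matrix Complex

/-- Quadratic form of a real PSD matrix on complex vectors is a nonneg real. -/
lemma quad_real {n : ℕ} (L : Matrix (Fin n) (Fin n) ℝ) (hL : L.PosSemidef) (x : Fin n → ℂ) :
    (star x ⬝ᵥ (L.map Complex.ofReal) *ᵥ x) =
      (((fun i => (x i).re) ⬝ᵥ L *ᵥ (fun i => (x i).re)
        + (fun i => (x i).im) ⬝ᵥ L *ᵥ (fun i => (x i).im) : ℝ) : ℂ) := by
  have hsym : ∀ i j, L j i = L i j := fun i j => by
    have := congrFun (congrFun hL.1 i) j
    simpa [Matrix.conjTranspose_apply] using this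
  apply Complex.ext
  · simp only [dotProduct, mulVec, Finset.mul_sum, Complex.re_sum, Complex.mul_re,
      Pi.star_apply, map_apply, Complex.ofReal_re, Complex.ofReal_im, RCLike.star_def,
      Complex.conj_re, Complex.conj_im, Complex.ofReal_sum, Complex.add_re]
    rw [← Finset.sum_add_distrib]
    refine Finset.sum_congr rfl fun i _ => ?_
    rw [← Finset.sum_add_distrib]
    refine Finset.sum_congr rfl fun j _ => ?_
    simp [Complex.mul_im]
  · simp only [dotProduct, mulVec, Finset.mul_sum, Complex.im_sum, Complex.mul_im,
      Pi.star_apply, map_apply, Complex.ofReal_re, Complex.ofReal_im, RCLike.star_def,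
      Complex.conj_re, Complex.conj_im, Complex.ofReal_sum, Complex.add_im]
    have h2 : ∑ i : Fin n, ∑ j : Fin n, (x i).im * (L i j * (x j).re)
        = ∑ i : Fin n, ∑ j : Fin n, (x i).re * (L i j * (x j).im) := by
      rw [Finset.sum_comm]
      refine Finset.sum_congr rfl fun i _ => Finset.sum_congr rfl fun j _ => ?_
      rw [hsym i j]; ring
    calc ∑ i : Fin n, ∑ j : Fin n,
          ((x i).re * (L i j * (x j).im + 0 * (x j).re) + -(x i).im * ((L i j : ℂ) * x j).re)
        = ∑ i : Fin n, ∑ j : Fin n,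
            ((x i).re * (L i j * (x j).im) - (x i).im * (L i j * (x j).re)) := by
          refine Finset.sum_congr rfl fun i _ => Finset.sum_congr rfl fun j _ => ?_
          simp [Complex.mul_re]; ring
      _ = 0 := by
          simp only [Finset.sum_sub_distrib]
          rw [h2, sub_self]

/-- pointwise content of Theorem 5 (passivity implies uniform bounds). -/
theorem stmt_3 {n : ℕ} (hn : 1 ≤ n) (ε : ℝ) (hε : 0 < ε)
    (z : Fin n → ℂ) (hz0 : ∀ i, z i ≠ 0)
    (hosp : ∀ i, ε * ‖z i‖ ^ 2 ≤ (z i).re)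
    (w : ℂ) (hw : 0 ≤ w.re)
    (L : Matrix (Fin n) (Fin n) ℝ) (hL : L.PosSemidef) :
    (IsUnit (Matrix.diagonal (fun i => (z i)⁻¹) + w • L.map (Complex.ofReal)) ∧
      specNorm (Matrix.diagonal (fun i => (z i)⁻¹) + w • L.map (Complex.ofReal))⁻¹ ≤ 2 / ε) ∧
    ((∑ i, (z i)⁻¹ ≠ 0) ∧ ‖((n : ℂ)⁻¹ * ∑ i, (z i)⁻¹)⁻¹‖ ≤ 2 / ε) := by
  have hinvle : ε⁻¹ ≤ 2 / ε := by
    rw [div_eq_mul_inv]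
    nlinarith [inv_pos.mpr hε]
  -- Re (z i)⁻¹ ≥ ε
  have hre : ∀ i, ε ≤ ((z i)⁻¹).re := by
    intro i
    rw [Complex.inv_re]
    have h0 : 0 < Complex.normSq (z i) := Complex.normSq_pos.2 (hz0 i)
    rw [le_div_iff₀ h0]
    calc ε * Complex.normSq (z i) = ε * ‖z i‖ ^ 2 := by
          rw [Complex.normSq_eq_norm_sq]
      _ ≤ (z i).re := hosp i
  -- Part (b)
  have hbsum : (ε * n : ℝ) ≤ (∑ i, (z i)⁻¹).re := by
    rw [Complex.re_sum]
    calc (ε * n : ℝ) = ∑ _i : Fin n, ε := by simp [mul_comm]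
      _ ≤ ∑ i, ((z i)⁻¹).re := Finset.sum_le_sum fun i _ => hre i
  have hnpos : (0 : ℝ) < n := by exact_mod_cast hn
  have hsne : (∑ i, (z i)⁻¹) ≠ 0 := by
    intro h
    rw [h] at hbsum
    simp only [Complex.zero_re] at hbsum
    nlinarith
  have hure : ε ≤ ((n : ℂ)⁻¹ * ∑ i, (z i)⁻¹).re := by
    have : ((n : ℂ)⁻¹ * ∑ i, (z i)⁻¹).re = (n : ℝ)⁻¹ * (∑ i, (z i)⁻¹).re := by
      rw [show ((n : ℂ))⁻¹ = (((n : ℝ)⁻¹ : ℝ) : ℂ) by push_cast; ring]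
      rw [Complex.re_ofReal_mul]
    rw [this]
    calc ε = (n : ℝ)⁻¹ * (ε * n) := by field_simp
      _ ≤ (n : ℝ)⁻¹ * (∑ i, (z i)⁻¹).re := by
          apply mul_le_mul_of_nonneg_left hbsum (by positivity)
  have hb2 : ‖((n : ℂ)⁻¹ * ∑ i, (z i)⁻¹)⁻¹‖ ≤ 2 / ε := by
    rw [norm_inv]
    refine le_trans ?_ hinvle
    have hun : ε ≤ ‖(n : ℂ)⁻¹ * ∑ i, (z i)⁻¹‖ :=
      le_trans hure (Complex.re_le_norm _)
    exact inv_anti₀ hε hun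
  -- Part (a)
  set A : Matrix (Fin n) (Fin n) ℂ :=
    Matrix.diagonal (fun i => (z i)⁻¹) + w • L.map Complex.ofReal with hA
  -- quadratic form bound on coordinates
  have hquad : ∀ v : Fin n → ℂ,
      ε * ∑ i, Complex.normSq (v i) ≤ (star v ⬝ᵥ A *ᵥ v).re := by
    intro v
    have hsplit : star v ⬝ᵥ A *ᵥ v =
        (star v ⬝ᵥ (Matrix.diagonal (fun i => (z i)⁻¹)) *ᵥ v)
          + w * (star v ⬝ᵥ (L.map Complex.ofReal) *ᵥ v) := by
      rw [hA, Matrix.add_mulVec, dotProduct_add, Matrix.smul_mulVec,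
        dotProduct_smul, smul_eq_mul]
    have hdiag : (star v ⬝ᵥ (Matrix.diagonal (fun i => (z i)⁻¹)) *ᵥ v).re
        = ∑ i, ((z i)⁻¹).re * Complex.normSq (v i) := by
      have : star v ⬝ᵥ (Matrix.diagonal (fun i => (z i)⁻¹)) *ᵥ v
          = ∑ i, (z i)⁻¹ * (Complex.normSq (v i) : ℂ) := by
        rw [Matrix.dotProduct_mulVec]
        simp only [Matrix.vecMul_diagonal, dotProduct, Pi.star_apply, RCLike.star_def]
        refine Finset.sum_congr rfl fun i _ => ?_
        rw [← Complex.mul_conj]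
        ring
      rw [this, Complex.re_sum]
      refine Finset.sum_congr rfl fun i _ => ?_
      rw [mul_comm ((z i)⁻¹) _, Complex.re_ofReal_mul, mul_comm]
    have hLpart : 0 ≤ (w * (star v ⬝ᵥ (L.map Complex.ofReal) *ᵥ v)).re := by
      rw [quad_real L hL v, mul_comm, Complex.re_ofReal_mul]
      have h1 : 0 ≤ (fun i => (v i).re) ⬝ᵥ L *ᵥ (fun i => (v i).re) := by
        simpa using hL.dotProduct_mulVec_nonneg (fun i => (v i).re)
      have h2 : 0 ≤ (fun i => (v i).im) ⬝ᵥ L *ᵥ (fun i => (v i).im) := by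
        simpa using hL.dotProduct_mulVec_nonneg (fun i => (v i).im)
      exact mul_nonneg (add_nonneg h1 h2) hw
    rw [hsplit, Complex.add_re, hdiag]
    have : ε * ∑ i, Complex.normSq (v i) ≤ ∑ i, ((z i)⁻¹).re * Complex.normSq (v i) := by
      rw [Finset.mul_sum]
      exact Finset.sum_le_sum fun i _ =>
        mul_le_mul_of_nonneg_right (hre i) (Complex.normSq_nonneg _)
    linarith
  -- operator lower bound
  set T := Matrix.toEuclideanCLM (𝕜 := ℂ) A with hT
  have hnorm_sq : ∀ x : EuclideanSpace ℂ (Fin n),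
      ‖x‖ ^ 2 = ∑ i, Complex.normSq (x i) := by
    intro x
    rw [EuclideanSpace.norm_eq, Real.sq_sqrt (by positivity)]
    exact Finset.sum_congr rfl fun i _ => by
      rw [Complex.sq_norm]
  have hlower : ∀ x : EuclideanSpace ℂ (Fin n), ε * ‖x‖ ≤ ‖T x‖ := by
    intro x
    have hinner : (inner ℂ x (T x) : ℂ) = star (WithLp.equiv 2 _ x) ⬝ᵥ A *ᵥ (WithLp.equiv 2 _ x) := by
      rw [EuclideanSpace.inner_eq_star_dotProduct]
      exact dotProduct_comm _ _
    have h1 : ε * ‖x‖ ^ 2 ≤ (inner ℂ x (T x) : ℂ).re := by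
      rw [hinner, hnorm_sq]
      exact hquad _
    have h2 : (inner ℂ x (T x) : ℂ).re ≤ ‖x‖ * ‖T x‖ := by
      have h3 := norm_inner_le_norm (𝕜 := ℂ) x (T x)
      exact le_trans (Complex.re_le_norm _) h3
    rcases eq_or_ne x 0 with rfl | hx
    · simp
    · have hxpos : 0 < ‖x‖ := norm_pos_iff.mpr hx
      have : ε * ‖x‖ * ‖x‖ ≤ ‖T x‖ * ‖x‖ := by nlinarith
      exact le_of_mul_le_mul_right this hxpos
  -- invertibility
  have hinj : Function.Injective A.mulVec := by
    intro u v huv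
    have hzero : A *ᵥ (u - v) = 0 := by
      rw [Matrix.mulVec_sub, huv, sub_self]
    set x : EuclideanSpace ℂ (Fin n) := (WithLp.equiv 2 _).symm (u - v) with hx
    have hTx : T x = 0 := by
      rw [hT, hx]; change WithLp.toLp 2 (A *ᵥ (u - v)) = 0; rw [hzero]
      simp
    have := hlower x
    rw [hTx, norm_zero] at this
    have hx0 : x = 0 := by
      have : ‖x‖ ≤ 0 := by nlinarith [norm_nonneg x]
      exact norm_le_zero_iff.mp this
    have : u - v = 0 := by
      have := congrArg (WithLp.equiv 2 (Fin n → ℂ)) hx0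
      simpa [hx] using this
    exact sub_eq_zero.mp this
  have hAunit : IsUnit A := Matrix.mulVec_injective_iff_isUnit.mp hinj
  refine ⟨⟨hAunit, ?_⟩, hsne, hb2⟩
  -- bound on the inverse
  set S := Matrix.toEuclideanCLM (𝕜 := ℂ) A⁻¹ with hS
  have hTS : ∀ y, T (S y) = y := by
    intro y
    have h1 : T * S = 1 := by
      have hm := _root_.map_mul (Matrix.toEuclideanCLM (𝕜 := ℂ) (n := Fin n)) A A⁻¹
      rw [hT, hS, ← hm, Matrix.mul_nonsing_inv _ ((Matrix.isUnit_iff_isUnit_det A).mp hAunit)]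
      exact _root_.map_one (Matrix.toEuclideanCLM (𝕜 := ℂ) (n := Fin n))
    calc T (S y) = (T * S) y := rfl
      _ = y := by rw [h1]; rfl
  have hSle : ‖S‖ ≤ ε⁻¹ := by
    refine ContinuousLinearMap.opNorm_le_bound S (by positivity) fun y => ?_
    have h1 := hlower (S y)
    rw [hTS y] at h1
    rw [inv_mul_eq_div, le_div_iff₀ hε]
    linarith
  exact le_trans hSle hinvle
end

section
/- Let S ⊂ ℂ be a nonempty compact set and let (Ω, ℱ, ℙ) be a probability space. Let X : ℕ → Ω → C(S, ℂ) be a sequence of measurable random variables with values in the space C(S,ℂ) of continuous functions on S with the sup norm, which are mutually independent and identically distributed. Assume there exist M₁, M₂, K > 0 such that for all i, n ≥ 1, ω ∈ Ω, and s, s₁, s₂ ∈ S: (i) |X i ω s| ≤ M₂; (ii) |(1/n)∑_{i=0}^{n−1} X i ω s| ≥ 1/M₁; (iii) |X i ω s₁ − X i ω s₂| ≤ K|s₁ − s₂|. Define ĥ(s) := ∫_Ω X 0 ω s dℙ(ω) and assume ĥ(s) ≠ 0 for all s ∈ S. Then for every ε > 0, ℙ{ω : sup_{s∈S} |((1/n)∑_{i=0}^{n−1}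 X i ω s)⁻¹ − ĥ(s)⁻¹| ≥ ε} → 0 as n → ∞. -/
open MeasureTheory ProbabilityTheory Filter Topology

/-- Lemma 8 of the paper, uniform convergence in probability of the
coherent dynamics (harmonic mean of random node dynamics) to its harmonic expectation. -/
theorem stmt_5 (S : Set ℂ) (hS : IsCompact S) (hSne : S.Nonempty)
    {Ω : Type*} [MeasurableSpace Ω] (P : Measure Ω) [IsProbabilityMeasure P]
    [MeasurableSpace C(↥S, ℂ)] [BorelSpace C(↥S, ℂ)]
    (X : ℕ → Ω → C(↥S, ℂ))
    (hmeas : ∀ i, Measurable (X i))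
    (hindep : iIndepFun X P)
    (hident : ∀ i, IdentDistrib (X i) (X 0) P P)
    (M₁ M₂ K : ℝ) (hM₁ : 0 < M₁) (hM₂ : 0 < M₂) (hK : 0 < K)
    (hbd : ∀ (i : ℕ) (ω : Ω) (s : ↥S), ‖X i ω s‖ ≤ M₂)
    (hmean : ∀ (n : ℕ), 1 ≤ n → ∀ (ω : Ω) (s : ↥S),
      1 / M₁ ≤ ‖(n : ℂ)⁻¹ * ∑ i ∈ Finset.range n, X i ω s‖)
    (hlip : ∀ (i : ℕ) (ω : Ω) (s₁ s₂ : ↥S),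
      ‖X i ω s₁ - X i ω s₂‖ ≤ K * ‖(s₁ : ℂ) - (s₂ : ℂ)‖)
    (hhat : ∀ s : ↥S, (∫ ω, X 0 ω s ∂P) ≠ 0)
    (ε : ℝ) (hε : 0 < ε) :
    Tendsto (fun n : ℕ =>
        P {ω | ε ≤ ⨆ s : ↥S,
            ‖((n : ℂ)⁻¹ * ∑ i ∈ Finset.range n, X i ω s)⁻¹ - (∫ ω', X 0 ω' s ∂P)⁻¹‖})
      atTop (𝓝 0) := by
  haveI : CompactSpace ↥S := isCompact_iff_compactSpace.mp hS
  haveI : Nonempty ↥S := hSne.to_subtype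
  -- integrability of X 0
  have hint : Integrable (X 0) P := by
    refine (integrable_const M₂).mono' ((hmeas 0).aestronglyMeasurable) ?_
    filter_upwards with ω
    exact (ContinuousMap.norm_le _ hM₂.le).2 fun s => hbd 0 ω s
  set h : C(↥S, ℂ) := ∫ ω, X 0 ω ∂P with hh
  have heval : ∀ s : ↥S, (∫ ω, X 0 ω s ∂P) = h s := by
    intro s
    rw [hh]
    exact (ContinuousMap.evalCLM ℂ s).integral_comp_comm hint
  have hne : ∀ s : ↥S, h s ≠ 0 := fun s => heval s ▸ hhat s
  -- positive lower bound on ‖h s‖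
  obtain ⟨s₀, -, hs₀⟩ := isCompact_univ.exists_isMinOn Set.univ_nonempty
    (h.continuous.norm.continuousOn)
  set δ : ℝ := ‖h s₀‖ with hδdef
  have hδpos : 0 < δ := norm_pos_iff.mpr (hne s₀)
  have hδ : ∀ s : ↥S, δ ≤ ‖h s‖ := fun s => hs₀ (Set.mem_univ s)
  -- strong law of large numbers in C(S, ℂ)
  have hslln : ∀ᵐ ω ∂P, Tendsto
      (fun n : ℕ => (n : ℝ)⁻¹ • (∑ i ∈ Finset.range n, X i ω)) atTop (𝓝 h) :=
    strong_law_ae X hint (fun i j hij => hindep.indepFun hij) hident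
  set g : ℕ → Ω → C(↥S, ℂ) := fun n ω => (n : ℝ)⁻¹ • (∑ i ∈ Finset.range n, X i ω) with hg
  have hgmeas : ∀ n, AEStronglyMeasurable (g n) P := by
    intro n
    have : Measurable (fun ω => ∑ i ∈ Finset.range n, X i ω) :=
      Finset.measurable_sum _ fun i _ => hmeas i
    exact (((continuous_const_smul ((n : ℝ)⁻¹)).measurable).comp this).aestronglyMeasurable
  have htim : TendstoInMeasure P g atTop (fun _ => h) :=
    tendstoInMeasure_of_tendsto_ae hgmeas hslln
  set C : ℝ := M₁ / δ with hC
  have hCpos : 0 < C := div_pos hM₁ hδpos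
  -- key bound
  have key : ∀ n : ℕ, 1 ≤ n → ∀ ω : Ω,
      (⨆ s : ↥S, ‖((n : ℂ)⁻¹ * ∑ i ∈ Finset.range n, X i ω s)⁻¹
        - (∫ ω', X 0 ω' s ∂P)⁻¹‖) ≤ C * ‖g n ω - h‖ := by
    intro n hn ω
    refine ciSup_le fun s => ?_
    set a : ℂ := (n : ℂ)⁻¹ * ∑ i ∈ Finset.range n, X i ω s with ha
    have haval : g n ω s = a := by
      simp [hg, ha, Complex.real_smul, Finset.mul_sum]
    have hanorm : 1 / M₁ ≤ ‖a‖ := hmean n hn ω s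
    have ha0 : a ≠ 0 := by
      intro hz
      rw [hz, norm_zero] at hanorm
      have h01 : (0:ℝ) < 1 / M₁ := by positivity
      linarith
    rw [heval s, inv_sub_inv ha0 (hne s), norm_div, norm_mul]
    have hnum : ‖h s - a‖ ≤ ‖g n ω - h‖ := by
      have : h s - a = -((g n ω - h) s) := by
        simp [haval, ContinuousMap.sub_apply]
      rw [this, norm_neg]
      exact ContinuousMap.norm_coe_le_norm _ s
    calc ‖h s - a‖ / (‖a‖ * ‖h s‖)
        ≤ ‖g n ω - h‖ / ((1 / M₁) * δ) := by
          apply div_le_div₀ (norm_nonneg _) hnum (by positivity)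
          exact mul_le_mul hanorm (hδ s) hδpos.le (norm_nonneg _)
      _ = C * ‖g n ω - h‖ := by
          rw [hC]; field_simp
  -- conclude
  have hε' : 0 < ε / C := div_pos hε hCpos
  refine tendsto_of_tendsto_of_tendsto_of_le_of_le' tendsto_const_nhds
    (tendstoInMeasure_iff_dist.mp htim (ε / C) hε') (Eventually.of_forall fun n => zero_le) ?_
  filter_upwards [eventually_ge_atTop 1] with n hn
  refine measure_mono fun ω hω => ?_
  simp only [Set.mem_setOf_eq] at hω ⊢
  have h1 : ε ≤ C * ‖g n ω - h‖ := le_trans hω (key n hn ω)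
  rw [dist_eq_norm]
  rw [div_le_iff₀ hCpos]
  linarith [h1, mul_comm C ‖g n ω - h‖]
end

section
/- Let n ≥ 2, let V be an n×n real orthogonal matrix (VᵀV = I) whose 0-th column equals (1/√n)𝟙, let λ : Fin n → ℝ with λ 0 = 0, and set L := V·diag(λ)·Vᵀ. Let g, φ ∈ ℂ with g ≠ 0 and 1 + gφλᵢ ≠ 0 for every i. Then the complex matrix I + gφ·L (with L coerced to ℂ) is invertible and (I + gφ·L)⁻¹ · (g·I) = (g/n)·𝟙𝟙ᵀ + V·diag(d)·Vᵀ, where d 0 = 0 and dᵢ = (g⁻¹ + φλᵢ)⁻¹ for i ≠ 0 (all matrices over ℂ, V coerced to ℂ). -/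
open Matrix Complex

/-- equation (4) of the paper, decomposition of the homogeneous
network transfer matrix. -/
theorem stmt_7 {n : ℕ} (hn : 2 ≤ n)
    (V : Matrix (Fin n) (Fin n) ℝ) (hV : Vᵀ * V = 1)
    (hV0 : ∀ i : Fin n, V i ⟨0, by omega⟩ = 1 / Real.sqrt n)
    (lam : Fin n → ℝ) (hlam0 : lam ⟨0, by omega⟩ = 0)
    (g φ : ℂ) (hg : g ≠ 0)
    (hpole : ∀ i : Fin n, (1 : ℂ) + g * φ * (lam i : ℂ) ≠ 0) :
    IsUnit ((1 : Matrix (Fin n) (Fin n) ℂ)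
        + (g * φ) • (V * Matrix.diagonal lam * Vᵀ).map (Complex.ofReal)) ∧
    ((1 : Matrix (Fin n) (Fin n) ℂ)
        + (g * φ) • (V * Matrix.diagonal lam * Vᵀ).map (Complex.ofReal))⁻¹
      * (g • (1 : Matrix (Fin n) (Fin n) ℂ))
    = (g / n) • allOnes n
      + (V.map Complex.ofReal)
        * Matrix.diagonal (fun i : Fin n =>
            if i = (⟨0, by omega⟩ : Fin n) then 0 else (g⁻¹ + φ * (lam i : ℂ))⁻¹)
        * (V.map Complex.ofReal)ᵀ := by
  have hn0 : (n : ℂ) ≠ 0 := Nat.cast_ne_zero.mpr (by omega)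
  have i0 : Fin n := ⟨0, by omega⟩
  set W : Matrix (Fin n) (Fin n) ℂ := V.map Complex.ofReal with hWdef
  have hmap : ∀ (A B : Matrix (Fin n) (Fin n) ℝ),
      (A * B).map Complex.ofReal = A.map Complex.ofReal * B.map Complex.ofReal := by
    intro A B
    exact Matrix.map_mul (f := Complex.ofRealHom)
  have hWt : Wᵀ = Vᵀ.map Complex.ofReal := by
    rw [hWdef, Matrix.transpose_map]
  have hWtW : Wᵀ * W = 1 := by
    rw [hWt, hWdef, ← hmap, hV]
    ext i j
    by_cases h : i = j <;> simp [Matrix.one_apply, h]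
  have hWWt : W * Wᵀ = 1 := mul_eq_one_comm.mp hWtW
  set c : Fin n → ℂ := fun i => 1 + g * φ * (lam i : ℂ) with hc
  have hA : (1 : Matrix (Fin n) (Fin n) ℂ)
        + (g * φ) • (V * Matrix.diagonal lam * Vᵀ).map Complex.ofReal
      = W * Matrix.diagonal c * Wᵀ := by
    have h1 : (V * Matrix.diagonal lam * Vᵀ).map Complex.ofReal
        = W * Matrix.diagonal (fun i => (lam i : ℂ)) * Wᵀ := by
      rw [hmap, hmap, hWt, hWdef]
      congr 1
      congr 1
      ext i j
      by_cases h : i = j <;> simp [Matrix.diagonal, h]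
    have h2 : Matrix.diagonal c
        = 1 + (g * φ) • Matrix.diagonal (fun i => (lam i : ℂ)) := by
      ext i j
      by_cases h : i = j <;> simp [Matrix.diagonal, Matrix.one_apply, h, hc]
    rw [h1, h2]
    simp only [Matrix.mul_add, Matrix.add_mul, Matrix.mul_one, hWWt,
      Matrix.mul_smul, Matrix.smul_mul]
  set B : Matrix (Fin n) (Fin n) ℂ := W * Matrix.diagonal (fun i => (c i)⁻¹) * Wᵀ with hB
  have hAB : ((1 : Matrix (Fin n) (Fin n) ℂ)
        + (g * φ) • (V * Matrix.diagonal lam * Vᵀ).map Complex.ofReal) * B = 1 := by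
    rw [hA, hB]
    calc W * Matrix.diagonal c * Wᵀ * (W * Matrix.diagonal (fun i => (c i)⁻¹) * Wᵀ)
        = W * Matrix.diagonal c * (Wᵀ * W) * Matrix.diagonal (fun i => (c i)⁻¹) * Wᵀ := by
          simp only [Matrix.mul_assoc]
      _ = W * (Matrix.diagonal c * Matrix.diagonal (fun i => (c i)⁻¹)) * Wᵀ := by
          rw [hWtW, Matrix.mul_one]; simp only [Matrix.mul_assoc]
      _ = 1 := by
          rw [Matrix.diagonal_mul_diagonal]
          have : (fun i => c i * (c i)⁻¹) = fun _ : Fin n => (1 : ℂ) := by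
            funext i; exact mul_inv_cancel₀ (hpole i)
          rw [this, Matrix.diagonal_one, Matrix.mul_one, hWWt]
  have hUnit : IsUnit ((1 : Matrix (Fin n) (Fin n) ℂ)
        + (g * φ) • (V * Matrix.diagonal lam * Vᵀ).map Complex.ofReal) := by
    haveI := invertibleOfRightInverse _ _ hAB
    exact isUnit_of_invertible _
  refine ⟨hUnit, ?_⟩
  rw [Matrix.inv_eq_right_inv hAB]
  -- B * (g • 1) = g • B = W * diagonal (g * c⁻¹) * Wᵀ
  have hBg : B * (g • (1 : Matrix (Fin n) (Fin n) ℂ))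
      = W * Matrix.diagonal (fun i => g * (c i)⁻¹) * Wᵀ := by
    rw [Matrix.mul_smul, Matrix.mul_one, hB]
    rw [← Matrix.smul_mul, ← Matrix.mul_smul, ← Matrix.diagonal_smul]
    rfl
  rw [hBg]
  -- split the diagonal
  have hsplit : (fun i => g * (c i)⁻¹)
      = fun i => ((if i = (⟨0, by omega⟩ : Fin n) then g else 0)
        + (if i = (⟨0, by omega⟩ : Fin n) then 0 else (g⁻¹ + φ * (lam i : ℂ))⁻¹)) := by
    funext i
    by_cases h : i = (⟨0, by omega⟩ : Fin n)
    · subst h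
      simp [hc, hlam0]
    · simp only [h, if_neg, if_false, zero_add]
      have hc' : g⁻¹ + φ * (lam i : ℂ) = g⁻¹ * c i := by
        rw [hc]; field_simp
      rw [hc', mul_inv, inv_inv, mul_comm]
  rw [hsplit]
  have hdiag : Matrix.diagonal (fun i => ((if i = (⟨0, by omega⟩ : Fin n) then g else 0)
        + (if i = (⟨0, by omega⟩ : Fin n) then 0 else (g⁻¹ + φ * (lam i : ℂ))⁻¹)))
      = Matrix.diagonal (fun i => if i = (⟨0, by omega⟩ : Fin n) then g else 0)
        + Matrix.diagonal (fun i => if i = (⟨0, by omega⟩ : Fin n) then 0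
            else (g⁻¹ + φ * (lam i : ℂ))⁻¹) := by
    rw [Matrix.diagonal_add]
  rw [hdiag, Matrix.mul_add, Matrix.add_mul]
  congr 1
  -- W * diagonal e * Wᵀ = (g/n) • allOnes n
  ext i j
  have hsum : (W * Matrix.diagonal (fun i => if i = (⟨0, by omega⟩ : Fin n) then g else 0) * Wᵀ) i j
      = W i ⟨0, by omega⟩ * g * W j ⟨0, by omega⟩ := by
    rw [Matrix.mul_assoc]
    rw [Matrix.mul_apply]
    have : ∀ k, (Matrix.diagonal (fun i => if i = (⟨0, by omega⟩ : Fin n) then g else 0) * Wᵀ) k j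
        = (if k = (⟨0, by omega⟩ : Fin n) then g else 0) * W j k := by
      intro k
      rw [Matrix.diagonal_mul]
      simp [Matrix.transpose_apply]
    simp only [this]
    rw [Finset.sum_eq_single (⟨0, by omega⟩ : Fin n)]
    · simp [mul_assoc]
    · intro b _ hb
      simp [hb]
    · intro h; exact absurd (Finset.mem_univ _) h
  rw [hsum]
  have hW0 : ∀ k : Fin n, W k ⟨0, by omega⟩ = ((1 / Real.sqrt n : ℝ) : ℂ) := by
    intro k
    rw [hWdef]
    simp [Matrix.map_apply, hV0 k]
  rw [hW0 i, hW0 j]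
  have hsq : ((1 / Real.sqrt n : ℝ) : ℂ) * ((1 / Real.sqrt n : ℝ) : ℂ) = 1 / (n : ℂ) := by
    rw [← Complex.ofReal_mul]
    have : (1 / Real.sqrt n) * (1 / Real.sqrt n) = 1 / (n : ℝ) := by
      rw [div_mul_div_comm, one_mul, Real.mul_self_sqrt (by positivity)]
    rw [this]
    push_cast
    ring
  have : ((1 / Real.sqrt n : ℝ) : ℂ) * g * ((1 / Real.sqrt n : ℝ) : ℂ)
      = g * (((1 / Real.sqrt n : ℝ) : ℂ) * ((1 / Real.sqrt n : ℝ) : ℂ)) := by ring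
  rw [this, hsq]
  simp [allOnes, Matrix.smul_apply]
  ring
end

section
/- Fix n ≥ 2 and let g, f : ℂ → ℂ. Let S ⊂ ℂ be a compact set on which g is continuous and nonvanishing (S contains neither zeros nor poles of g) and on which f is continuous and nonvanishing. Then for every ε > 0 there exists λ₀ > 0 such that for every n×n real symmetric positive semidefinite matrix L with L𝟙 = 0 satisfying x*Lx ≥ λ₀‖x‖² for every complex vector x orthogonal to 𝟙, and every s ∈ S, the matrix g(s)⁻¹·I + f(s)·L is invertible and ‖(g(s)⁻¹·I + f(s)·L)⁻¹ − (1/n)g(s)·𝟙𝟙ᵀ‖ ≤ ε. -/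
open Matrix Complex

set_option maxHeartbeats 1000000 in
/-- motivating example (Section 2.1), first claim: homogeneous
network coherence under high network connectivity. -/
theorem stmt_8 {n : ℕ} (hn : 2 ≤ n) (g f : ℂ → ℂ)
    (S : Set ℂ) (hS : IsCompact S)
    (hgcont : ContinuousOn g S) (hg0 : ∀ s ∈ S, g s ≠ 0)
    (hfcont : ContinuousOn f S) (hf0 : ∀ s ∈ S, f s ≠ 0)
    (ε : ℝ) (hε : 0 < ε) :
    ∃ lam0 > 0, ∀ L : Matrix (Fin n) (Fin n) ℝ,
      L.PosSemidef → L.mulVec (fun _ => 1) = 0 →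
      (∀ x : Fin n → ℂ, (∑ i, x i = 0) →
        lam0 * ∑ i, ‖x i‖ ^ 2 ≤ (star x ⬝ᵥ (L.map (Complex.ofReal)).mulVec x).re) →
      ∀ s ∈ S,
        IsUnit ((g s)⁻¹ • (1 : Matrix (Fin n) (Fin n) ℂ) + f s • L.map (Complex.ofReal)) ∧
        specNorm (((g s)⁻¹ • (1 : Matrix (Fin n) (Fin n) ℂ) + f s • L.map (Complex.ofReal))⁻¹
            - ((n : ℂ)⁻¹ * g s) • allOnes n) ≤ ε := by
  rcases S.eq_empty_or_nonempty with hSe | hSne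
  · exact ⟨1, one_pos, fun L _ _ _ s hs => absurd (hSe ▸ hs) (Set.notMem_empty s)⟩
  obtain ⟨s₁, hs₁, hminf⟩ := hS.exists_isMinOn hSne hfcont.norm
  obtain ⟨s₂, hs₂, hming⟩ := hS.exists_isMinOn hSne hgcont.norm
  set c := ‖f s₁‖ with hcdef
  set cg := ‖g s₂‖ with hcgdef
  have hc0 : 0 < c := norm_pos_iff.mpr (hf0 _ hs₁)
  have hcg0 : 0 < cg := norm_pos_iff.mpr (hg0 _ hs₂)
  set K : ℝ := max ε⁻¹ 1 with hKdef
  have hK1 : (1:ℝ) ≤ K := le_max_right _ _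
  have hK0 : (0:ℝ) < K := lt_of_lt_of_le one_pos hK1
  have hKinv : K⁻¹ ≤ ε := by
    have h1 : ε⁻¹ ≤ K := le_max_left _ _
    calc K⁻¹ ≤ (ε⁻¹)⁻¹ := by
          apply inv_anti₀ (by positivity) h1
      _ = ε := inv_inv ε
  set lam0 : ℝ := (cg⁻¹ + K) / c with hlamdef
  have hlam0 : 0 < lam0 := by positivity
  refine ⟨lam0, hlam0, ?_⟩
  intro L hPSD hL1 hquad s hs
  set A := L.map (Complex.ofReal) with hAdef
  set M := (g s)⁻¹ • (1 : Matrix (Fin n) (Fin n) ℂ) + f s • A with hMdef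
  have hgs : g s ≠ 0 := hg0 s hs
  have hgsinv : (g s)⁻¹ ≠ 0 := inv_ne_zero hgs
  have hfs : c ≤ ‖f s‖ := hminf hs
  have hginv_le : ‖(g s)⁻¹‖ ≤ cg⁻¹ := by
    rw [norm_inv]
    exact inv_anti₀ hcg0 (hming hs)
  -- symmetry of L
  have hLsym : ∀ i j, L j i = L i j := by
    intro i j
    have := congrFun (congrFun hPSD.1 i) j
    simpa [Matrix.conjTranspose_apply] using this
  -- row sums of A vanish
  have hL1' : ∀ i, ∑ j, L i j = 0 := by
    intro i
    have := congrFun hL1 i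
    simpa [Matrix.mulVec, dotProduct] using this
  have hA1 : ∀ i, ∑ j, A i j = 0 := by
    intro i
    simp only [hAdef, Matrix.map_apply]
    rw [← Complex.ofReal_sum, hL1' i, Complex.ofReal_zero]
  have hcolsum : ∀ j, ∑ i, A i j = 0 := by
    intro j
    have : ∀ i, A i j = A j i := by
      intro i; simp only [hAdef, Matrix.map_apply, hLsym]
    simp_rw [this]
    exact hA1 j
  -- mulVec of M
  have hMu : ∀ u : Fin n → ℂ, M.mulVec u = (g s)⁻¹ • u + f s • A.mulVec u := by
    intro u
    rw [hMdef, Matrix.add_mulVec, Matrix.smul_mulVec, Matrix.smul_mulVec,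
      Matrix.one_mulVec]
  -- key estimate
  have key : ∀ u w : Fin n → ℂ, M.mulVec u = w → (∑ i, w i = 0) →
      K * ‖(WithLp.equiv 2 (Fin n → ℂ)).symm u‖ ≤ ‖(WithLp.equiv 2 (Fin n → ℂ)).symm w‖ := by
    intro u w huw hwsum
    set eu := (WithLp.equiv 2 (Fin n → ℂ)).symm u with heu
    set ew := (WithLp.equiv 2 (Fin n → ℂ)).symm w with hew
    set N : ℝ := ∑ i, ‖u i‖ ^ 2 with hNdef
    have hN0 : 0 ≤ N := Finset.sum_nonneg fun i _ => by positivity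
    have hAusum : ∑ i, (A.mulVec u) i = 0 := by
      simp only [Matrix.mulVec, dotProduct]
      rw [Finset.sum_comm]
      simp_rw [← Finset.sum_mul]
      simp [hcolsum]
    have husum : ∑ i, u i = 0 := by
      have h0 : ∑ i, (M.mulVec u) i = 0 := by rw [huw]; exact hwsum
      rw [hMu u] at h0
      simp only [Pi.add_apply, Pi.smul_apply, smul_eq_mul, Finset.sum_add_distrib,
        ← Finset.mul_sum] at h0
      rw [hAusum, mul_zero, add_zero] at h0
      exact (mul_eq_zero.mp h0).resolve_left hgsinv
    have hq := hquad u husum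
    set q : ℂ := star u ⬝ᵥ A.mulVec u with hqdef
    have hqre : lam0 * N ≤ q.re := hq
    have hqre0 : 0 ≤ q.re := le_trans (mul_nonneg hlam0.le hN0) hqre
    have hNusq : star u ⬝ᵥ u = (N : ℂ) := by
      simp only [dotProduct, Pi.star_apply, hNdef]
      push_cast
      refine Finset.sum_congr rfl fun i _ => ?_
      rw [RCLike.star_def, RCLike.conj_mul]
      norm_cast
    have hinner : (inner ℂ eu ew : ℂ) = (g s)⁻¹ * (N : ℂ) + f s * q := by
      rw [heu, hew, WithLp.equiv_symm_apply, EuclideanSpace.inner_toLp_toLp, dotProduct_comm, ← huw, hMu u]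
      simp only [dotProduct, Pi.add_apply, Pi.smul_apply, smul_eq_mul]
      rw [← hNusq, hqdef]
      simp only [dotProduct, Pi.star_apply]
      rw [Finset.mul_sum, Finset.mul_sum, ← Finset.sum_add_distrib]
      congr 1; ext i; ring
    have hnormb : c * (lam0 * N) ≤ ‖f s * q‖ := by
      rw [norm_mul]
      have h1 : q.re ≤ ‖q‖ := by exact Complex.re_le_norm q
      have h2 : lam0 * N ≤ ‖q‖ := le_trans hqre h1
      exact mul_le_mul hfs h2 (mul_nonneg hlam0.le hN0) (norm_nonneg _)
    have hnorma : ‖(g s)⁻¹ * (N : ℂ)‖ ≤ cg⁻¹ * N := by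
      rw [norm_mul, Complex.norm_real, Real.norm_of_nonneg hN0]
      exact mul_le_mul_of_nonneg_right hginv_le hN0
    have hclam : c * lam0 = cg⁻¹ + K := by
      rw [hlamdef]; field_simp
    have hlow : K * N ≤ ‖(inner ℂ eu ew : ℂ)‖ := by
      rw [hinner]
      have h3 : ‖f s * q‖ ≤ ‖(g s)⁻¹ * (N : ℂ) + f s * q‖ + ‖(g s)⁻¹ * (N : ℂ)‖ := by
        calc ‖f s * q‖ = ‖((g s)⁻¹ * (N : ℂ) + f s * q) - (g s)⁻¹ * (N : ℂ)‖ := by ring_nf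
          _ ≤ _ := norm_sub_le _ _
      have h4 : c * (lam0 * N) = (cg⁻¹ + K) * N := by rw [← hclam]; ring
      nlinarith [hnormb, hnorma]
    have hcs : ‖(inner ℂ eu ew : ℂ)‖ ≤ ‖eu‖ * ‖ew‖ := norm_inner_le_norm eu ew
    have heunorm : ‖eu‖ ^ 2 = N := by
      rw [heu, EuclideanSpace.norm_eq]
      rw [Real.sq_sqrt (Finset.sum_nonneg fun i _ => by positivity)]
      rfl
    have heu0 : 0 ≤ ‖eu‖ := norm_nonneg _
    rcases eq_or_lt_of_le heu0 with h | h
    · rw [← h, mul_zero]; exact norm_nonneg _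
    · have : K * ‖eu‖ ^ 2 ≤ ‖eu‖ * ‖ew‖ := by
        rw [heunorm]; exact le_trans hlow hcs
      nlinarith
  -- invertibility
  have hinj : Function.Injective M.mulVec := by
    intro u v huv
    have h0 : M.mulVec (u - v) = 0 := by
      rw [Matrix.mulVec_sub, huv, sub_self]
    have := key (u - v) 0 h0 (by simp)
    rw [WithLp.equiv_symm_apply, WithLp.toLp_zero, norm_zero, ← mul_zero K] at this
    have h1 : ‖(WithLp.equiv 2 (Fin n → ℂ)).symm (u - v)‖ ≤ 0 :=
      (mul_le_mul_iff_of_pos_left hK0).mp this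
    have : (WithLp.equiv 2 (Fin n → ℂ)).symm (u - v) = 0 :=
      norm_le_zero_iff.mp h1
    have huv0 : u - v = 0 := by
      simpa using congrArg (WithLp.equiv 2 (Fin n → ℂ)) this
    exact sub_eq_zero.mp huv0
  have hMunit : IsUnit M := Matrix.mulVec_injective_iff_isUnit.mp hinj
  have hMdet : IsUnit M.det := (Matrix.isUnit_iff_isUnit_det M).mp hMunit
  refine ⟨hMunit, ?_⟩
  -- matrix identity
  have hAones : A * allOnes n = 0 := by
    ext i j
    simp only [allOnes, Matrix.mul_apply, Matrix.of_apply, mul_one, Matrix.zero_apply]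
    exact hA1 i
  have hnne : (n : ℂ) ≠ 0 := by
    exact_mod_cast Nat.cast_ne_zero.mpr (by omega : n ≠ 0)
  have hrow : ∀ i, ∑ k, M i k = (g s)⁻¹ := by
    intro i
    rw [hMdef]
    simp only [Matrix.add_apply, Matrix.smul_apply, smul_eq_mul]
    rw [Finset.sum_add_distrib, ← Finset.mul_sum, ← Finset.mul_sum, hA1 i, mul_zero,
      add_zero]
    simp [Matrix.one_apply]
  have hMP : M * (((n : ℂ)⁻¹ * g s) • allOnes n) = (n : ℂ)⁻¹ • allOnes n := by
    ext i j
    simp only [Matrix.mul_apply, Matrix.smul_apply, allOnes, Matrix.of_apply,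
      smul_eq_mul, mul_one]
    rw [← Finset.sum_mul, hrow i]
    field_simp
  have hD : M⁻¹ - ((n : ℂ)⁻¹ * g s) • allOnes n = M⁻¹ * (1 - (n : ℂ)⁻¹ • allOnes n) := by
    rw [Matrix.mul_sub, Matrix.mul_one, ← hMP, ← Matrix.mul_assoc,
      Matrix.nonsing_inv_mul M hMdet, Matrix.one_mul]
  rw [specNorm, hD]
  apply ContinuousLinearMap.opNorm_le_bound _ hε.le
  intro x
  set xf : Fin n → ℂ := WithLp.equiv 2 (Fin n → ℂ) x with hxf
  set m : ℂ := (n : ℂ)⁻¹ * ∑ j, xf j with hm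
  set w : Fin n → ℂ := fun i => xf i - m with hw
  have hQw : (1 - (n : ℂ)⁻¹ • allOnes n).mulVec xf = w := by
    funext i
    simp only [Matrix.sub_mulVec, Matrix.one_mulVec, Matrix.smul_mulVec,
      Pi.sub_apply, Pi.smul_apply, smul_eq_mul, hw]
    congr 1
    simp only [Matrix.mulVec, dotProduct, allOnes, Matrix.of_apply, one_mul, hm]
  have hwsum : ∑ i, w i = 0 := by
    simp only [hw, Finset.sum_sub_distrib, Finset.sum_const, Finset.card_univ,
      Fintype.card_fin, nsmul_eq_mul, hm]
    rw [← mul_assoc, mul_inv_cancel₀ hnne, one_mul, sub_self]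
  set ew := (WithLp.equiv 2 (Fin n → ℂ)).symm w with hew
  set em := (WithLp.equiv 2 (Fin n → ℂ)).symm (fun _ => m : Fin n → ℂ) with hem
  have hxsplit : x = em + ew := by
    apply (WithLp.equiv 2 (Fin n → ℂ)).injective
    funext i
    simp [hew, hem, hw, hxf]
  have hinner0 : (inner ℂ em ew : ℂ) = 0 := by
    rw [hem, hew, WithLp.equiv_symm_apply, EuclideanSpace.inner_toLp_toLp, dotProduct_comm]
    simp only [dotProduct, Pi.star_apply, RCLike.star_def]
    rw [← Finset.mul_sum, hwsum, mul_zero]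
  have hwle : ‖ew‖ ≤ ‖x‖ := by
    have := norm_add_sq_eq_norm_sq_add_norm_sq_of_inner_eq_zero em ew hinner0
    rw [← hxsplit] at this
    nlinarith [norm_nonneg x, norm_nonneg ew, norm_nonneg em]
  set u : Fin n → ℂ := M⁻¹.mulVec w with hu
  have hMuw : M.mulVec u = w := by
    rw [hu, Matrix.mulVec_mulVec, Matrix.mul_nonsing_inv M hMdet, Matrix.one_mulVec]
  have hkey := key u w hMuw hwsum
  have happ : (Matrix.toEuclideanCLM (𝕜 := ℂ) (M⁻¹ * (1 - (n : ℂ)⁻¹ • allOnes n))) x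
      = (WithLp.equiv 2 (Fin n → ℂ)).symm u := by
    apply (WithLp.equiv 2 (Fin n → ℂ)).injective
    rw [WithLp.equiv_apply, Matrix.ofLp_toEuclideanCLM]
    change (M⁻¹ * (1 - (n : ℂ)⁻¹ • allOnes n)) *ᵥ (WithLp.equiv 2 (Fin n → ℂ) x) = _
    rw [← hxf, ← Matrix.mulVec_mulVec, hQw, ← hu]
    simp [hu]
  rw [happ]
  calc ‖(WithLp.equiv 2 (Fin n → ℂ)).symm u‖ ≤ K⁻¹ * ‖ew‖ := by
        have h5 := (le_div_iff₀' hK0).mpr hkey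
        rwa [div_eq_inv_mul] at h5
    _ ≤ ε * ‖x‖ := mul_le_mul hKinv hwle (norm_nonneg _) hε.le
end

section
/- Fix n ≥ 2, let g, f : ℂ → ℂ, and let L be an n×n real symmetric positive semidefinite matrix with L𝟙 = 0 for which there exists μ > 0 with x*Lx ≥ μ‖x‖² for every complex vector x orthogonal to 𝟙 (the network is connected: λ₂(L) > 0). Let s₀ ∈ ℂ and suppose: (i) |f(s)| → ∞ as s → s₀ through values s ≠ s₀ (s₀ is a pole of f); (ii) there exist δ, M > 0 such that 1/M ≤ |g(s)| ≤ M for all s with 0 < |s − s₀| ≤ δ. Then ‖(g(s)⁻¹·I + f(s)·L)⁻¹ − (1/n)g(s)·𝟙𝟙ᵀ‖ → 0 as s → s₀ through values s ≠ s₀. -/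
open Matrix Complex Filter Topology

noncomputable def eN {n : ℕ} (x : Fin n → ℂ) : ℝ := ‖(WithLp.equiv 2 (Fin n → ℂ)).symm x‖

lemma eN_sq {n : ℕ} (x : Fin n → ℂ) : eN x ^ 2 = ∑ i, ‖x i‖ ^ 2 := by
  rw [eN, EuclideanSpace.norm_eq]
  rw [Real.sq_sqrt (by positivity)]
  simp [WithLp.equiv_symm_apply]

lemma eN_nonneg {n : ℕ} (x : Fin n → ℂ) : 0 ≤ eN x := norm_nonneg _

lemma eN_eq_zero {n : ℕ} {x : Fin n → ℂ} (h : eN x = 0) : x = 0 := by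
  have := norm_eq_zero.mp h
  have := congrArg (WithLp.equiv 2 (Fin n → ℂ)) this
  simpa using this

lemma dot_cs {n : ℕ} (x y : Fin n → ℂ) : ‖star x ⬝ᵥ y‖ ≤ eN x * eN y := by
  have h := norm_inner_le_norm (𝕜 := ℂ) ((WithLp.equiv 2 (Fin n → ℂ)).symm x)
    ((WithLp.equiv 2 (Fin n → ℂ)).symm y)
  have he : inner ℂ ((WithLp.equiv 2 (Fin n → ℂ)).symm x) ((WithLp.equiv 2 (Fin n → ℂ)).symm y)
      = star x ⬝ᵥ y := by
    simp [PiLp.inner_apply, WithLp.equiv_symm_apply, dotProduct, RCLike.inner_apply,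
      mul_comm]
  rw [he] at h
  exact h


section
variable {n : ℕ} (γ φ : ℂ) (L : Matrix (Fin n) (Fin n) ℝ)

-- column sums of Lc are zero
lemma col_sum_zero (hsym : L.IsSymm) (hL1 : L.mulVec (fun _ => 1) = 0) (j : Fin n) :
    ∑ i, (L.map (Complex.ofReal)) i j = 0 := by
  have h1 : ∑ i, L j i = 0 := by
    have := congrFun hL1 j
    simpa [Matrix.mulVec, dotProduct] using this
  have h2 : ∀ i, L i j = L j i := fun i => by
    conv_lhs => rw [← hsym]
    rfl
  simp only [Matrix.map_apply]
  rw [← Complex.ofReal_sum]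
  simp [h2, h1]

lemma lc_mulVec_sum (hsym : L.IsSymm) (hL1 : L.mulVec (fun _ => 1) = 0) (y : Fin n → ℂ) :
    ∑ i, ((L.map (Complex.ofReal)).mulVec y) i = 0 := by
  simp only [Matrix.mulVec, dotProduct]
  rw [Finset.sum_comm]
  simp only [← Finset.sum_mul]
  refine Finset.sum_eq_zero fun j _ => ?_
  rw [col_sum_zero L hsym hL1 j, zero_mul]

lemma A_mulVec (y : Fin n → ℂ) :
    (γ⁻¹ • (1 : Matrix (Fin n) (Fin n) ℂ) + φ • L.map (Complex.ofReal)).mulVec y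
      = γ⁻¹ • y + φ • (L.map (Complex.ofReal)).mulVec y := by
  rw [Matrix.add_mulVec, Matrix.smul_mulVec, Matrix.smul_mulVec, Matrix.one_mulVec]

lemma A_sum (hsym : L.IsSymm) (hL1 : L.mulVec (fun _ => 1) = 0) (y : Fin n → ℂ) :
    ∑ i, ((γ⁻¹ • (1 : Matrix (Fin n) (Fin n) ℂ) + φ • L.map (Complex.ofReal)).mulVec y) i
      = γ⁻¹ * ∑ i, y i := by
  rw [A_mulVec]
  simp only [Pi.add_apply, Pi.smul_apply, smul_eq_mul, Finset.sum_add_distrib]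
  rw [← Finset.mul_sum, ← Finset.mul_sum, lc_mulVec_sum L hsym hL1]
  ring

end

lemma star_dot_self {n : ℕ} (x : Fin n → ℂ) :
    star x ⬝ᵥ x = ((∑ i, ‖x i‖ ^ 2 : ℝ) : ℂ) := by
  push_cast
  simp only [dotProduct, Pi.star_apply, RCLike.star_def]
  congr 1
  ext i
  rw [← Complex.normSq_eq_conj_mul_self, Complex.normSq_eq_norm_sq]
  simp

lemma coercive {n : ℕ} (γ φ : ℂ) (L : Matrix (Fin n) (Fin n) ℝ) (μ M : ℝ) (hM : 0 < M)
    (hgap : ∀ x : Fin n → ℂ, (∑ i, x i = 0) →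
      μ * ∑ i, ‖x i‖ ^ 2 ≤ (star x ⬝ᵥ (L.map (Complex.ofReal)).mulVec x).re)
    (hγl : 1 / M ≤ ‖γ‖)
    (x : Fin n → ℂ) (hx : ∑ i, x i = 0) :
    (μ * ‖φ‖ - M) * eN x ≤ eN ((γ⁻¹ • (1 : Matrix (Fin n) (Fin n) ℂ)
      + φ • L.map (Complex.ofReal)).mulVec x) := by
  set S : ℝ := ∑ i, ‖x i‖ ^ 2 with hS
  have hS0 : 0 ≤ S := Finset.sum_nonneg fun i _ => by positivity
  set t : ℂ := star x ⬝ᵥ (L.map (Complex.ofReal)).mulVec x with ht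
  have hγpos : 0 < ‖γ‖ := lt_of_lt_of_le (by positivity) hγl
  have hγ0 : γ ≠ 0 := by simpa using hγpos.ne'
  have hγinv : ‖γ⁻¹‖ ≤ M := by
    rw [norm_inv, inv_le_comm₀ hγpos hM]
    rw [one_div] at hγl; exact hγl
  -- dot product computation
  have hdot : star x ⬝ᵥ ((γ⁻¹ • (1 : Matrix (Fin n) (Fin n) ℂ)
      + φ • L.map (Complex.ofReal)).mulVec x) = γ⁻¹ * (S : ℂ) + φ * t := by
    rw [A_mulVec, dotProduct_add, dotProduct_smul, dotProduct_smul, star_dot_self]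
    simp only [smul_eq_mul, ← hS, ← ht]
  have hret : μ * S ≤ t.re := hgap x hx
  have htnorm : μ * S ≤ ‖t‖ := le_trans hret (by
    calc t.re ≤ |t.re| := le_abs_self _
    _ ≤ ‖t‖ := Complex.abs_re_le_norm t
    _ = ‖t‖ := rfl)
  have hlow : (μ * ‖φ‖ - M) * S ≤ ‖γ⁻¹ * (S : ℂ) + φ * t‖ := by
    have h1 : ‖φ * t‖ ≤ ‖γ⁻¹ * (S : ℂ) + φ * t‖ + ‖γ⁻¹ * (S:ℂ)‖ := by
      calc ‖φ * t‖ = ‖(γ⁻¹ * (S : ℂ) + φ * t) - γ⁻¹ * (S:ℂ)‖ := by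
            rw [add_sub_cancel_left]
      _ ≤ _ := norm_sub_le _ _
    have h2 : μ * ‖φ‖ * S ≤ ‖φ * t‖ := by
      rw [norm_mul]
      calc μ * ‖φ‖ * S = ‖φ‖ * (μ * S) := by ring
      _ ≤ ‖φ‖ * ‖t‖ := by
          apply mul_le_mul_of_nonneg_left htnorm (norm_nonneg _)
    have h3 : ‖γ⁻¹ * (S:ℂ)‖ ≤ M * S := by
      rw [norm_mul]
      have : ‖(S:ℂ)‖ = S := by rw [Complex.norm_real, Real.norm_of_nonneg hS0]
      rw [this]
      exact mul_le_mul_of_nonneg_right hγinv hS0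
    nlinarith [h1, h2, h3]
  have hcs := dot_cs x ((γ⁻¹ • (1 : Matrix (Fin n) (Fin n) ℂ)
      + φ • L.map (Complex.ofReal)).mulVec x)
  rw [hdot] at hcs
  have key : (μ * ‖φ‖ - M) * (eN x)^2 ≤ eN x * eN ((γ⁻¹ • (1 : Matrix (Fin n) (Fin n) ℂ)
      + φ • L.map (Complex.ofReal)).mulVec x) := by
    rw [eN_sq]
    exact le_trans hlow hcs
  rcases eq_or_lt_of_le (eN_nonneg x) with h | h
  · rw [← h]; simp [eN_nonneg]
  · nlinarith [key, h]

lemma specNorm_le_of_forall {n : ℕ} (A : Matrix (Fin n) (Fin n) ℂ) {K : ℝ} (hK : 0 ≤ K)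
    (h : ∀ x : Fin n → ℂ, eN (A.mulVec x) ≤ K * eN x) : specNorm A ≤ K := by
  apply ContinuousLinearMap.opNorm_le_bound _ hK
  intro v
  have hv : v = (WithLp.equiv 2 (Fin n → ℂ)).symm ((WithLp.equiv 2 (Fin n → ℂ)) v) := rfl
  rw [hv, WithLp.equiv_symm_apply, Matrix.toEuclideanCLM_toLp]
  exact h _

-- invertibility

lemma A_isUnit {n : ℕ} (γ φ : ℂ) (L : Matrix (Fin n) (Fin n) ℝ) {c : ℝ} (hc : 0 < c)
    (hγ0 : γ ≠ 0)
    (hsum : ∀ y : Fin n → ℂ,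
      ∑ i, ((γ⁻¹ • (1 : Matrix (Fin n) (Fin n) ℂ) + φ • L.map (Complex.ofReal)).mulVec y) i
        = γ⁻¹ * ∑ i, y i)
    (hcoer : ∀ x : Fin n → ℂ, ∑ i, x i = 0 →
      c * eN x ≤ eN ((γ⁻¹ • (1 : Matrix (Fin n) (Fin n) ℂ)
        + φ • L.map (Complex.ofReal)).mulVec x)) :
    IsUnit (γ⁻¹ • (1 : Matrix (Fin n) (Fin n) ℂ) + φ • L.map (Complex.ofReal)) := by
  set A := γ⁻¹ • (1 : Matrix (Fin n) (Fin n) ℂ) + φ • L.map (Complex.ofReal) with hA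
  rw [Matrix.isUnit_iff_isUnit_det, isUnit_iff_ne_zero]
  intro hdet
  obtain ⟨v, hv0, hv⟩ := (Matrix.exists_mulVec_eq_zero_iff.mpr hdet)
  have h1 : γ⁻¹ * ∑ i, v i = 0 := by rw [← hsum v, hv]; simp
  have h2 : ∑ i, v i = 0 := by
    field_simp at h1
    simpa using h1
  have h3 := hcoer v h2
  rw [hv] at h3
  have : eN (0 : Fin n → ℂ) = 0 := by simp [eN]
  rw [this] at h3
  have h4 : eN v ≤ 0 := by nlinarith [h3, hc]
  have h5 : eN v = 0 := le_antisymm h4 (norm_nonneg _)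
  apply hv0
  have := norm_eq_zero.mp h5
  have := congrArg (WithLp.equiv 2 (Fin n → ℂ)) this
  simpa using this

lemma key_bound {n : ℕ} (hn : 2 ≤ n) (γ φ : ℂ) (L : Matrix (Fin n) (Fin n) ℝ)
    (hsym : L.IsSymm) (hL1 : L.mulVec (fun _ => 1) = 0) (μ M : ℝ) (hμ : 0 < μ) (hM : 0 < M)
    (hgap : ∀ x : Fin n → ℂ, (∑ i, x i = 0) →
      μ * ∑ i, ‖x i‖ ^ 2 ≤ (star x ⬝ᵥ (L.map (Complex.ofReal)).mulVec x).re)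
    (hγl : 1 / M ≤ ‖γ‖) (hφ : M < μ * ‖φ‖) :
    specNorm ((γ⁻¹ • (1 : Matrix (Fin n) (Fin n) ℂ) + φ • L.map (Complex.ofReal))⁻¹
      - ((n : ℂ)⁻¹ * γ) • allOnes n) ≤ 2 / (μ * ‖φ‖ - M) := by
  set c : ℝ := μ * ‖φ‖ - M with hc
  have hc0 : 0 < c := by linarith
  have hγpos : 0 < ‖γ‖ := lt_of_lt_of_le (by positivity) hγl
  have hγ0 : γ ≠ 0 := by simpa using hγpos.ne'
  have hn0 : (n : ℂ) ≠ 0 := by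
    simp only [ne_eq, Nat.cast_eq_zero]; omega
  set A := γ⁻¹ • (1 : Matrix (Fin n) (Fin n) ℂ) + φ • L.map (Complex.ofReal) with hA
  have hcoer := coercive γ φ L μ M hM hgap hγl
  have hsum := A_sum γ φ L hsym hL1
  have hU : IsUnit A := A_isUnit γ φ L hc0 hγ0 hsum hcoer
  have hUdet : IsUnit A.det := (Matrix.isUnit_iff_isUnit_det A).mp hU
  have hInv : A * A⁻¹ = 1 := Matrix.mul_nonsing_inv A hUdet
  have hInv' : A⁻¹ * A = 1 := Matrix.nonsing_inv_mul A hUdet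
  -- Lc kills ones
  have hLc1 : (L.map (Complex.ofReal)).mulVec (fun _ => (1:ℂ)) = 0 := by
    funext i
    have := congrFun hL1 i
    simp only [Matrix.mulVec, dotProduct, Matrix.map_apply, Pi.zero_apply] at this ⊢
    simp only [mul_one] at this ⊢
    rw [← Complex.ofReal_sum, this]
    simp
  have hAone : A.mulVec (fun _ => (1:ℂ)) = γ⁻¹ • (fun _ => (1:ℂ)) := by
    rw [hA, A_mulVec, hLc1]
    simp
  apply specNorm_le_of_forall _ (by positivity)
  intro x
  set u : Fin n → ℂ := fun _ => 1 with hu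
  set m : ℂ := (n : ℂ)⁻¹ * ∑ i, x i with hm
  -- compute T x
  have hTx : (A⁻¹ - ((n : ℂ)⁻¹ * γ) • allOnes n).mulVec x
      = A⁻¹.mulVec x - (γ * m) • u := by
    rw [Matrix.sub_mulVec, Matrix.smul_mulVec]
    congr 1
    funext i
    simp only [Pi.smul_apply, Matrix.mulVec, dotProduct, allOnes, Matrix.of_apply, one_mul,
      smul_eq_mul, hm, hu]
    ring
  set y := A⁻¹.mulVec x - (γ * m) • u with hy
  rw [hTx]
  -- A y = x - m • u
  have hAy : A.mulVec y = x - m • u := by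
    rw [hy, Matrix.mulVec_sub, Matrix.mulVec_smul, hAone]
    rw [Matrix.mulVec_mulVec, hInv, Matrix.one_mulVec]
    congr 1
    rw [smul_smul]
    congr 1
    field_simp
  -- sum of x - m u is zero
  have hsumAy : ∑ i, (x - m • u) i = 0 := by
    simp only [Pi.sub_apply, Pi.smul_apply, smul_eq_mul, hu, mul_one, Finset.sum_sub_distrib,
      Finset.sum_const, Finset.card_univ, Fintype.card_fin, nsmul_eq_mul, hm]
    field_simp
    ring
  -- hence sum y = 0
  have hsumy : ∑ i, y i = 0 := by
    have h1 := hsum y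
    rw [← hA] at h1
    rw [hAy, hsumAy] at h1
    have := h1.symm
    field_simp at this
    simpa using this
  -- coercivity
  have h2 := hcoer y hsumy
  rw [← hA, hAy] at h2
  -- bound eN (x - m • u)
  have hENu : eN u ^ 2 = (n : ℝ) := by
    rw [eN_sq]; simp [hu]
  have hsx : ‖∑ i, x i‖ ≤ eN u * eN x := by
    have := dot_cs u x
    have hsu : star u ⬝ᵥ x = ∑ i, x i := by
      simp [hu, dotProduct]
    rwa [hsu] at this
  have hmu : eN (m • u) ≤ eN x := by
    have h3 : eN (m • u) = ‖m‖ * eN u := by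
      rw [eN, eN, WithLp.equiv_symm_apply, WithLp.toLp_smul, norm_smul]
    have h4 : ‖m‖ ≤ (n : ℝ)⁻¹ * (eN u * eN x) := by
      rw [hm, norm_mul]
      have : ‖((n:ℂ))⁻¹‖ = (n:ℝ)⁻¹ := by
        rw [norm_inv, Complex.norm_natCast]
      rw [this]
      apply mul_le_mul_of_nonneg_left hsx (by positivity)
    have hnpos : (0:ℝ) < n := by positivity
    calc eN (m • u) = ‖m‖ * eN u := h3
    _ ≤ ((n : ℝ)⁻¹ * (eN u * eN x)) * eN u := by
        apply mul_le_mul_of_nonneg_right h4 (eN_nonneg u)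
    _ = (eN u ^ 2 / n) * eN x := by ring
    _ = eN x := by rw [hENu]; field_simp
  have htri : eN (x - m • u) ≤ eN x + eN (m • u) := by
    rw [eN, eN, eN, WithLp.equiv_symm_apply, WithLp.toLp_sub]
    exact norm_sub_le _ _
  have hfin : c * eN y ≤ 2 * eN x := by
    calc c * eN y ≤ eN (x - m • u) := h2
    _ ≤ eN x + eN (m • u) := htri
    _ ≤ 2 * eN x := by linarith
  rw [div_mul_eq_mul_div, le_div_iff₀ hc0]
  nlinarith [hfin]

/-- motivating example (Section 2.1), second claim: homogeneous
network coherence under high gain in the coupling dynamics. -/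
theorem stmt_9 {n : ℕ} (hn : 2 ≤ n) (g f : ℂ → ℂ)
    (L : Matrix (Fin n) (Fin n) ℝ) (hL : L.PosSemidef)
    (hL1 : L.mulVec (fun _ => 1) = 0)
    (μ : ℝ) (hμ : 0 < μ)
    (hgap : ∀ x : Fin n → ℂ, (∑ i, x i = 0) →
      μ * ∑ i, ‖x i‖ ^ 2 ≤ (star x ⬝ᵥ (L.map (Complex.ofReal)).mulVec x).re)
    (s₀ : ℂ)
    (hf : Tendsto (fun s => ‖f s‖) (𝓝[≠] s₀) atTop)
    (hbd : ∃ δ > 0, ∃ M > 0, ∀ s : ℂ, 0 < ‖s - s₀‖ → ‖s - s₀‖ ≤ δ →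
      1 / M ≤ ‖g s‖ ∧ ‖g s‖ ≤ M) :
    Tendsto (fun s =>
        specNorm (((g s)⁻¹ • (1 : Matrix (Fin n) (Fin n) ℂ) + f s • L.map (Complex.ofReal))⁻¹
          - ((n : ℂ)⁻¹ * g s) • allOnes n))
      (𝓝[≠] s₀) (𝓝 0) := by
  obtain ⟨δ, hδ, M, hM, hgM⟩ := hbd
  have hsym : L.IsSymm := by
    have h := hL.isHermitian
    ext i j
    have h2 := congrFun (congrFun h i) j
    simpa [Matrix.conjTranspose_apply] using h2
  -- eventual bound
  have hev1 : ∀ᶠ s in 𝓝[≠] s₀, ‖s - s₀‖ ≤ δ := by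
    apply eventually_nhdsWithin_of_eventually_nhds
    rw [Metric.eventually_nhds_iff]
    exact ⟨δ, hδ, fun {s} h => by rw [Complex.dist_eq] at h; exact le_of_lt h⟩
  have hev2 : ∀ᶠ s in 𝓝[≠] s₀, s ≠ s₀ := eventually_mem_nhdsWithin
  have hev3 : ∀ᶠ s in 𝓝[≠] s₀, (M + 1) / μ ≤ ‖f s‖ := hf.eventually_ge_atTop _
  have hbound : ∀ᶠ s in 𝓝[≠] s₀,
      specNorm (((g s)⁻¹ • (1 : Matrix (Fin n) (Fin n) ℂ) + f s • L.map (Complex.ofReal))⁻¹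
          - ((n : ℂ)⁻¹ * g s) • allOnes n) ≤ 2 / (μ * ‖f s‖ - M) := by
    filter_upwards [hev1, hev2, hev3] with s h1 h2 h3
    have hpos : 0 < ‖s - s₀‖ := by
      rw [norm_pos_iff, sub_ne_zero]; exact h2
    obtain ⟨hgl, hgu⟩ := hgM s hpos h1
    have hφ : M < μ * ‖f s‖ := by
      have : M + 1 ≤ μ * ‖f s‖ := by
        rw [div_le_iff₀ hμ] at h3
        linarith [h3]
      linarith
    exact key_bound hn (g s) (f s) L hsym hL1 μ M hμ hM hgap hgl hφ
  have htend : Tendsto (fun s => 2 / (μ * ‖f s‖ - M)) (𝓝[≠] s₀) (𝓝 0) := by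
    apply Tendsto.div_atTop (tendsto_const_nhds (x := (2:ℝ)))
    apply tendsto_atTop_add_const_right
    exact hf.const_mul_atTop hμ
  apply squeeze_zero' _ hbound htend
  filter_upwards with s
  exact norm_nonneg _
end

section
/- For all real α > 0 and K ≥ 0, ∫_{Kα}^{∞} α/√(4α⁴ + ω⁴) dω ≤ π/2 − arctan(K/√2). -/
open Real MeasureTheory

/-- bound on the high-frequency tail integral in the proof of
Theorem 6. -/
theorem stmt_14 (α K : ℝ) (hα : 0 < α) (hK : 0 ≤ K) :
    ∫ ω in Set.Ioi (K * α), α / Real.sqrt (4 * α ^ 4 + ω ^ 4)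
      ≤ π / 2 - Real.arctan (K / Real.sqrt 2) := by
  set c : ℝ := Real.sqrt 2 * α with hc
  have h2 : (0:ℝ) < Real.sqrt 2 := Real.sqrt_pos.mpr (by norm_num)
  have hcpos : 0 < c := mul_pos h2 hα
  have hc2 : c ^ 2 = 2 * α ^ 2 := by
    rw [hc, mul_pow, Real.sq_sqrt (by norm_num : (2:ℝ) ≥ 0)]
  -- derivative facts for G x = arctan (x / c)
  have hderiv : ∀ x ∈ Set.Ici (K * α),
      HasDerivAt (fun x => Real.arctan (x / c)) (c / (c ^ 2 + x ^ 2)) x := by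
    intro x _
    have h1 : HasDerivAt (fun x : ℝ => x / c) (1 / c) x := by
      simpa using (hasDerivAt_id x).div_const c
    have := (Real.hasDerivAt_arctan (x / c)).comp x h1
    refine this.congr_deriv ?_
    field_simp
  have hg'pos : ∀ x ∈ Set.Ioi (K * α), 0 ≤ c / (c ^ 2 + x ^ 2) := fun x _ =>
    div_nonneg hcpos.le (by positivity)
  have htend : Filter.Tendsto (fun x => Real.arctan (x / c)) Filter.atTop
      (nhds (π / 2)) := by
    exact (Real.tendsto_arctan_atTop.comp
      (Filter.tendsto_id.atTop_div_const hcpos)).mono_right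
      nhdsWithin_le_nhds
  have hint : IntegrableOn (fun x => c / (c ^ 2 + x ^ 2)) (Set.Ioi (K * α)) :=
    integrableOn_Ioi_deriv_of_nonneg' hderiv hg'pos htend
  have hval : ∫ x in Set.Ioi (K * α), c / (c ^ 2 + x ^ 2)
      = π / 2 - Real.arctan (K / Real.sqrt 2) := by
    rw [integral_Ioi_of_hasDerivAt_of_nonneg' hderiv hg'pos htend]
    rw [hc, mul_div_mul_right _ _ hα.ne']
  rw [← hval]
  refine integral_mono_of_nonneg ?_ hint ?_
  · exact Filter.Eventually.of_forall fun x => by positivity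
  · refine Filter.Eventually.of_forall fun x => ?_
    have hkey : (c ^ 2 + x ^ 2) ≤ Real.sqrt 2 * Real.sqrt (4 * α ^ 4 + x ^ 4) := by
      rw [← Real.sqrt_mul (by norm_num : (0:ℝ) ≤ 2)]
      have h1 : (c ^ 2 + x ^ 2) ^ 2 ≤ 2 * (4 * α ^ 4 + x ^ 4) := by
        rw [hc2]; nlinarith [sq_nonneg (2 * α ^ 2 - x ^ 2)]
      calc c ^ 2 + x ^ 2 = Real.sqrt ((c ^ 2 + x ^ 2) ^ 2) := by
            rw [Real.sqrt_sq (by positivity)]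
        _ ≤ Real.sqrt (2 * (4 * α ^ 4 + x ^ 4)) := Real.sqrt_le_sqrt h1
    have hs : 0 < Real.sqrt (4 * α ^ 4 + x ^ 4) := Real.sqrt_pos.mpr (by positivity)
    rw [div_le_div_iff₀ hs (by positivity)]
    calc α * (c ^ 2 + x ^ 2) ≤ α * (Real.sqrt 2 * Real.sqrt (4 * α ^ 4 + x ^ 4)) := by
          exact mul_le_mul_of_nonneg_left hkey hα.le
      _ = c * Real.sqrt (4 * α ^ 4 + x ^ 4) := by rw [hc]; ring
end

section
/- For all real α > 0 and K > 0, ∫₀^{Kα} α·√(α² + ω²)/√(4α⁴ + ω⁴) dω ≤ (√2/2)·α·(√2·arctan(K/√2) + log(1 + K²/2)). -/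
open Real

lemma aux_deriv (α : ℝ) (hα : 0 < α) (ω : ℝ) :
    HasDerivAt (fun ω => α * Real.arctan (ω / (Real.sqrt 2 * α))
        + (Real.sqrt 2 / 2) * α * Real.log (2 * α ^ 2 + ω ^ 2))
      (Real.sqrt 2 * α * (α + ω) / (2 * α ^ 2 + ω ^ 2)) ω := by
  have hs2 : (0:ℝ) < Real.sqrt 2 := Real.sqrt_pos.mpr (by norm_num)
  have hden : (0:ℝ) < 2 * α ^ 2 + ω ^ 2 := by positivity
  have h1 : HasDerivAt (fun ω : ℝ => ω / (Real.sqrt 2 * α)) (1 / (Real.sqrt 2 * α)) ω :=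
    (hasDerivAt_id ω).div_const _
  have h2 : HasDerivAt (fun ω : ℝ => α * Real.arctan (ω / (Real.sqrt 2 * α)))
      (α * ((1 / (1 + (ω / (Real.sqrt 2 * α)) ^ 2)) * (1 / (Real.sqrt 2 * α)))) ω :=
    ((Real.hasDerivAt_arctan _).comp ω h1).const_mul α
  have h3 : HasDerivAt (fun ω : ℝ => 2 * α ^ 2 + ω ^ 2) (2 * ω ^ 1) ω :=
    (hasDerivAt_pow 2 ω).const_add _
  have h4 : HasDerivAt (fun ω : ℝ => (Real.sqrt 2 / 2) * α * Real.log (2 * α ^ 2 + ω ^ 2))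
      ((Real.sqrt 2 / 2) * α * ((2 * α ^ 2 + ω ^ 2)⁻¹ * (2 * ω ^ 1))) ω :=
    ((Real.hasDerivAt_log hden.ne').comp ω h3).const_mul _
  have := h2.add h4
  refine this.congr_deriv ?_
  symm
  have hsq : Real.sqrt 2 ^ 2 = 2 := Real.sq_sqrt (by norm_num)
  have h24 : Real.sqrt 2 ^ 4 = 4 := by nlinarith [hsq]
  field_simp
  ring_nf
  simp only [h24, hsq]

/-- bound on the low-frequency integral in the proof of Theorem 6. -/
theorem stmt_15 (α K : ℝ) (hα : 0 < α) (hK : 0 < K) :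
    ∫ ω in (0:ℝ)..(K * α), α * Real.sqrt (α ^ 2 + ω ^ 2) / Real.sqrt (4 * α ^ 4 + ω ^ 4)
      ≤ (Real.sqrt 2 / 2) * α
        * (Real.sqrt 2 * Real.arctan (K / Real.sqrt 2) + Real.log (1 + K ^ 2 / 2)) := by
  have hs2 : (0:ℝ) < Real.sqrt 2 := Real.sqrt_pos.mpr (by norm_num)
  have hsq : Real.sqrt 2 ^ 2 = 2 := Real.sq_sqrt (by norm_num)
  have hKα : (0:ℝ) ≤ K * α := by positivity
  -- integrability of both functions
  have hcont1 : ContinuousOn (fun ω => α * Real.sqrt (α ^ 2 + ω ^ 2) / Real.sqrt (4 * α ^ 4 + ω ^ 4))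
      (Set.uIcc 0 (K * α)) := by
    apply ContinuousOn.div
    · exact (continuous_const.mul (continuous_const.add (continuous_pow 2)).sqrt).continuousOn
    · exact (continuous_const.add (continuous_pow 4)).sqrt.continuousOn
    · intro x _
      have : (0:ℝ) < 4 * α ^ 4 + x ^ 4 := by positivity
      exact (Real.sqrt_pos.mpr this).ne'
  have hcont2 : ContinuousOn (fun ω => Real.sqrt 2 * α * (α + ω) / (2 * α ^ 2 + ω ^ 2))
      (Set.uIcc 0 (K * α)) := by
    apply ContinuousOn.div
    · exact (continuous_const.mul (continuous_const.add continuous_id)).continuousOn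
    · exact (continuous_const.add (continuous_pow 2)).continuousOn
    · intro x _
      have : (0:ℝ) < 2 * α ^ 2 + x ^ 2 := by positivity
      exact this.ne'
  have hint1 : IntervalIntegrable
      (fun ω => α * Real.sqrt (α ^ 2 + ω ^ 2) / Real.sqrt (4 * α ^ 4 + ω ^ 4))
      MeasureTheory.volume 0 (K * α) := hcont1.intervalIntegrable
  have hint2 : IntervalIntegrable (fun ω => Real.sqrt 2 * α * (α + ω) / (2 * α ^ 2 + ω ^ 2))
      MeasureTheory.volume 0 (K * α) := hcont2.intervalIntegrable
  -- pointwise bound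
  have hmono : ∫ ω in (0:ℝ)..(K * α), α * Real.sqrt (α ^ 2 + ω ^ 2) / Real.sqrt (4 * α ^ 4 + ω ^ 4)
      ≤ ∫ ω in (0:ℝ)..(K * α), Real.sqrt 2 * α * (α + ω) / (2 * α ^ 2 + ω ^ 2) := by
    apply intervalIntegral.integral_mono_on hKα hint1 hint2
    intro ω hω
    obtain ⟨hω0, _⟩ := hω
    have hnum : Real.sqrt (α ^ 2 + ω ^ 2) ≤ α + ω := by
      rw [show α + ω = Real.sqrt ((α + ω) ^ 2) from (Real.sqrt_sq (by positivity)).symm]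
      apply Real.sqrt_le_sqrt
      nlinarith
    have hden : (2 * α ^ 2 + ω ^ 2) / Real.sqrt 2 ≤ Real.sqrt (4 * α ^ 4 + ω ^ 4) := by
      rw [div_le_iff₀ hs2]
      rw [show Real.sqrt (4 * α ^ 4 + ω ^ 4) * Real.sqrt 2
          = Real.sqrt ((4 * α ^ 4 + ω ^ 4) * 2) from (Real.sqrt_mul (by positivity) 2).symm]
      rw [show 2 * α ^ 2 + ω ^ 2 = Real.sqrt ((2 * α ^ 2 + ω ^ 2) ^ 2) from
        (Real.sqrt_sq (by positivity)).symm]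
      apply Real.sqrt_le_sqrt
      nlinarith [sq_nonneg (2 * α ^ 2 - ω ^ 2)]
    have hdpos : (0:ℝ) < 2 * α ^ 2 + ω ^ 2 := by positivity
    have hspos : (0:ℝ) < Real.sqrt (4 * α ^ 4 + ω ^ 4) := Real.sqrt_pos.mpr (by positivity)
    calc α * Real.sqrt (α ^ 2 + ω ^ 2) / Real.sqrt (4 * α ^ 4 + ω ^ 4)
        ≤ α * (α + ω) / ((2 * α ^ 2 + ω ^ 2) / Real.sqrt 2) := by
          apply div_le_div₀ (by positivity) (by nlinarith) (by positivity) hden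
      _ = Real.sqrt 2 * α * (α + ω) / (2 * α ^ 2 + ω ^ 2) := by
          field_simp
  refine hmono.trans_eq ?_
  -- evaluate the integral
  rw [intervalIntegral.integral_eq_sub_of_hasDerivAt (fun ω _ => aux_deriv α hα ω) hint2]
  have h1 : K * α / (Real.sqrt 2 * α) = K / Real.sqrt 2 := by
    field_simp
  have h2 : (0:ℝ) / (Real.sqrt 2 * α) = 0 := by simp
  have hlog : Real.log (2 * α ^ 2 + (K * α) ^ 2) - Real.log (2 * α ^ 2 + 0 ^ 2)
      = Real.log (1 + K ^ 2 / 2) := by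
    rw [show (2 * α ^ 2 + 0 ^ 2 : ℝ) = 2 * α ^ 2 by ring,
      ← Real.log_div (by positivity) (by positivity)]
    congr 1
    field_simp
  simp only [h1, h2, Real.arctan_zero, mul_zero]
  linear_combination (Real.sqrt 2 / 2 * α) * hlog
    - (Real.arctan (K / Real.sqrt 2) * α / 2) * hsq
end

section
/- Let γ, C, δ > 0 and let E : ℂ → ℝ satisfy: (i) 0 ≤ E(s) ≤ 2γ for every s with Re(s) > 0; (ii) E(s) ≤ C·|s| for every s with Re(s) > 0 and |s| ≤ δ; (iii) for every α > 0 the function ω ↦ E(α + iω) is measurable on ℝ. Then for every ε > 0 there exists α₀ ∈ (0, log 2] such that for every α with 0 < α ≤ α₀, (e^α/(2π))·∫_ℝ E(α + iω)·(α/√(4α⁴ + ω⁴)) dω ≤ ε. -/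
open Real MeasureTheory Complex

set_option maxHeartbeats 1600000 in
/-- the key analytic estimate in the proof of Theorem 6
(coherent response to low-frequency sinusoidal inputs). -/
theorem stmt_16 (γ C δ : ℝ) (hγ : 0 < γ) (hC : 0 < C) (hδ : 0 < δ)
    (E : ℂ → ℝ)
    (h1 : ∀ s : ℂ, 0 < s.re → 0 ≤ E s ∧ E s ≤ 2 * γ)
    (h2 : ∀ s : ℂ, 0 < s.re → ‖s‖ ≤ δ → E s ≤ C * ‖s‖)
    (h3 : ∀ α : ℝ, 0 < α → Measurable (fun ω : ℝ => E (α + ω * Complex.I))) :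
    ∀ ε > 0, ∃ α₀ : ℝ, 0 < α₀ ∧ α₀ ≤ Real.log 2 ∧
      ∀ α : ℝ, 0 < α → α ≤ α₀ →
        (Real.exp α / (2 * π))
            * ∫ ω : ℝ, E (α + ω * Complex.I) * (α / Real.sqrt (4 * α ^ 4 + ω ^ 4))
          ≤ ε := by
  intro ε hε
  set R : ℝ := min (δ/2) (ε/(4*C)) with hRdef
  have hR0 : 0 < R := lt_min (by positivity) (by positivity)
  have hRδ : R ≤ δ/2 := min_le_left _ _
  have hRε : R ≤ ε/(4*C) := min_le_right _ _
  have hlog2 : 0 < Real.log 2 := Real.log_pos (by norm_num)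
  refine ⟨min (min R (Real.log 2)) (ε*R/(8*γ)), by positivity, ?_, ?_⟩
  · exact le_trans (min_le_left _ _) (min_le_right _ _)
  intro α hα hαle
  have hαR : α ≤ R := hαle.trans ((min_le_left _ _).trans (min_le_left _ _))
  have hαlog : α ≤ Real.log 2 := hαle.trans ((min_le_left _ _).trans (min_le_right _ _))
  have hα3 : α ≤ ε*R/(8*γ) := hαle.trans (min_le_right _ _)
  set K : ℝ := 2*C*R^2 + 4*γ*α with hKdef
  have hK0 : 0 < K := by positivity
  have hre : ∀ ω : ℝ, (0:ℝ) < ((α : ℂ) + (ω : ℂ) * Complex.I).re := by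
    intro ω; simp [hα]
  have hsq : ∀ ω : ℝ, 0 < Real.sqrt (4*α^4 + ω^4) := fun ω =>
    Real.sqrt_pos.mpr (by positivity)
  -- pointwise bound of the integrand
  have hgnn : ∀ ω : ℝ,
      0 ≤ E ((α:ℂ) + (ω:ℂ) * Complex.I) * (α / Real.sqrt (4 * α ^ 4 + ω ^ 4)) := by
    intro ω
    exact mul_nonneg (h1 _ (hre ω)).1 (by positivity)
  have hgB : ∀ ω : ℝ,
      E ((α:ℂ) + (ω:ℂ) * Complex.I) * (α / Real.sqrt (4 * α ^ 4 + ω ^ 4))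
        ≤ K / (R^2 + ω^2) := by
    intro ω
    have hden : (0:ℝ) < R^2 + ω^2 := by positivity
    have hs := hsq ω
    rcases le_or_gt |ω| R with hcase | hcase
    · -- near zone : |ω| ≤ R
      have habs : ‖((α:ℂ) + (ω:ℂ) * Complex.I)‖ = Real.sqrt (α^2 + ω^2) :=
        Complex.norm_add_mul_I α ω
      have hαδ : α ≤ δ/2 := hαR.trans hRδ
      have hωδ : |ω| ≤ δ/2 := hcase.trans hRδ
      have hsle : ‖((α:ℂ) + (ω:ℂ) * Complex.I)‖ ≤ δ := by
        rw [habs]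
        have h6 : α^2 + ω^2 ≤ δ^2 := by
          nlinarith [_root_.sq_abs ω, abs_nonneg ω, hα.le, hδ.le]
        calc Real.sqrt (α^2 + ω^2) ≤ Real.sqrt (δ^2) := Real.sqrt_le_sqrt h6
          _ = δ := Real.sqrt_sq hδ.le
      have hE : E ((α:ℂ) + (ω:ℂ) * Complex.I) ≤ C * (α + |ω|) := by
        refine (h2 _ (hre ω) hsle).trans ?_
        rw [habs]
        refine mul_le_mul_of_nonneg_left ?_ hC.le
        have h7 : α^2 + ω^2 ≤ (α + |ω|)^2 := by
          nlinarith [_root_.sq_abs ω, mul_nonneg hα.le (abs_nonneg ω)]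
        calc Real.sqrt (α^2 + ω^2) ≤ Real.sqrt ((α + |ω|)^2) := Real.sqrt_le_sqrt h7
          _ = α + |ω| := Real.sqrt_sq (by positivity)
      have hkey : (α + |ω|) * α ≤ Real.sqrt (4*α^4 + ω^4) := by
        have h8 : ((α + |ω|) * α)^2 ≤ 4*α^4 + ω^4 := by
          nlinarith [_root_.sq_abs ω, sq_nonneg (α^2 - ω^2), sq_nonneg (α^2 - α*|ω|),
            abs_nonneg ω, mul_nonneg hα.le (abs_nonneg ω), sq_nonneg α, sq_nonneg ω,
            sq_nonneg (α*|ω|)]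
        calc (α + |ω|) * α = Real.sqrt (((α + |ω|) * α)^2) :=
              (Real.sqrt_sq (by positivity)).symm
          _ ≤ Real.sqrt (4*α^4 + ω^4) := Real.sqrt_le_sqrt h8
      have hgC : E ((α:ℂ) + (ω:ℂ) * Complex.I) * (α / Real.sqrt (4 * α ^ 4 + ω ^ 4)) ≤ C := by
        have step1 : E ((α:ℂ) + (ω:ℂ) * Complex.I) * (α / Real.sqrt (4 * α ^ 4 + ω ^ 4))
            ≤ (C * (α + |ω|)) * (α / Real.sqrt (4 * α ^ 4 + ω ^ 4)) :=
          mul_le_mul_of_nonneg_right hE (by positivity)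
        refine step1.trans ?_
        have heq : (C * (α + |ω|)) * (α / Real.sqrt (4 * α ^ 4 + ω ^ 4))
            = (C * ((α + |ω|) * α)) / Real.sqrt (4 * α ^ 4 + ω ^ 4) := by ring
        rw [heq, div_le_iff₀ hs]
        exact mul_le_mul_of_nonneg_left hkey hC.le
      refine hgC.trans ?_
      rw [le_div_iff₀ hden]
      have hω2 : ω^2 ≤ R^2 := by
        nlinarith [_root_.sq_abs ω, abs_nonneg ω, hR0.le]
      nlinarith [mul_pos hγ hα, hC.le]
    · -- far zone : R < |ω|
      have hω2 : (0:ℝ) < ω^2 := by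
        have : (0:ℝ) < |ω| := hR0.trans hcase
        nlinarith [_root_.sq_abs ω]
      have hRω : R^2 ≤ ω^2 := by
        nlinarith [_root_.sq_abs ω, hR0.le, hcase.le, abs_nonneg ω]
      have hsqge : ω^2 ≤ Real.sqrt (4*α^4 + ω^4) := by
        calc ω^2 = Real.sqrt ((ω^2)^2) := (Real.sqrt_sq (sq_nonneg ω)).symm
          _ ≤ Real.sqrt (4*α^4 + ω^4) := Real.sqrt_le_sqrt (by nlinarith [pow_pos hα 4])
      have step1 : E ((α:ℂ) + (ω:ℂ) * Complex.I) * (α / Real.sqrt (4 * α ^ 4 + ω ^ 4))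
          ≤ (2*γ) * (α / ω^2) := by
        refine mul_le_mul (h1 _ (hre ω)).2 ?_ (by positivity) (by positivity)
        exact div_le_div_of_nonneg_left hα.le hω2 hsqge
      refine step1.trans ?_
      have heq : (2*γ) * (α / ω^2) = (2*γ*α) / ω^2 := by ring
      rw [heq, div_le_div_iff₀ hω2 hden]
      nlinarith [mul_pos hγ hα, mul_nonneg (mul_nonneg (by norm_num : (0:ℝ) ≤ 2) hC.le)
        (mul_nonneg (sq_nonneg R) (sq_nonneg ω)), mul_nonneg (mul_nonneg hγ.le hα.le) (sub_nonneg.mpr hRω)]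
    -- integrability and value of the dominating function
  have heqB : (fun ω : ℝ => K/(R^2+ω^2)) = fun ω : ℝ => (K/R^2) * (1 + (ω * R⁻¹)^2)⁻¹ := by
    funext ω; field_simp
  have hB_int : Integrable (fun ω : ℝ => K / (R^2 + ω^2)) := by
    rw [heqB]
    exact (integrable_inv_one_add_sq.comp_mul_right' (inv_ne_zero hR0.ne')).const_mul _
  have hB_val : ∫ ω : ℝ, K / (R^2 + ω^2) = K * π / R := by
    rw [heqB, MeasureTheory.integral_const_mul,
      MeasureTheory.Measure.integral_comp_mul_right (fun x : ℝ => (1+x^2)⁻¹) R⁻¹,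
      integral_univ_inv_one_add_sq, inv_inv, abs_of_pos hR0, smul_eq_mul]
    field_simp
  -- integrability of the integrand
  have hg_meas : Measurable (fun ω : ℝ =>
      E ((α:ℂ) + (ω:ℂ) * Complex.I) * (α / Real.sqrt (4 * α ^ 4 + ω ^ 4))) := by
    refine (h3 α hα).mul ?_
    fun_prop
  have hg_int : Integrable (fun ω : ℝ =>
      E ((α:ℂ) + (ω:ℂ) * Complex.I) * (α / Real.sqrt (4 * α ^ 4 + ω ^ 4))) := by
    refine hB_int.mono' hg_meas.aestronglyMeasurable ?_
    exact Filter.Eventually.of_forall fun ω => by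
      rw [Real.norm_of_nonneg (hgnn ω)]; exact hgB ω
  have hInt_le : (∫ ω : ℝ, E ((α:ℂ) + (ω:ℂ) * Complex.I)
      * (α / Real.sqrt (4 * α ^ 4 + ω ^ 4))) ≤ K * π / R := by
    calc (∫ ω : ℝ, E ((α:ℂ) + (ω:ℂ) * Complex.I) * (α / Real.sqrt (4 * α ^ 4 + ω ^ 4)))
        ≤ ∫ ω : ℝ, K / (R^2 + ω^2) := integral_mono hg_int hB_int hgB
      _ = K * π / R := hB_val
  have hInn : 0 ≤ ∫ ω : ℝ, E ((α:ℂ) + (ω:ℂ) * Complex.I)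
      * (α / Real.sqrt (4 * α ^ 4 + ω ^ 4)) := integral_nonneg hgnn
  have hπ : (0:ℝ) < π := Real.pi_pos
  have hexp : Real.exp α ≤ 2 := by
    calc Real.exp α ≤ Real.exp (Real.log 2) := Real.exp_le_exp.mpr hαlog
      _ = 2 := Real.exp_log (by norm_num)
  have hfinal : K / R ≤ ε := by
    rw [div_le_iff₀ hR0]
    have e1 : R*(4*C) ≤ ε := (le_div_iff₀ (by positivity)).mp hRε
    have e2 : α*(8*γ) ≤ ε*R := (le_div_iff₀ (by positivity)).mp hα3
    nlinarith [mul_le_mul_of_nonneg_right e1 hR0.le]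
  calc (Real.exp α / (2 * π))
        * ∫ ω : ℝ, E ((α:ℂ) + (ω:ℂ) * Complex.I) * (α / Real.sqrt (4 * α ^ 4 + ω ^ 4))
      ≤ (Real.exp α / (2 * π)) * (K * π / R) :=
        mul_le_mul_of_nonneg_left hInt_le (by positivity)
    _ ≤ (2 / (2 * π)) * (K * π / R) := by
        refine mul_le_mul_of_nonneg_right ?_ (by positivity)
        exact div_le_div_of_nonneg_right hexp (by positivity) |>.trans_eq rfl
    _ = K / R := by field_simp
    _ ≤ ε := hfinal
end
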